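/- arXiv:2410.12528 — 4 statements merged into one kernel-verified Lean document; each statement's English description precedes it below -/
import Mathlib

section
/- If Γ is a countable nonamenable group, then for any continuous action Γ ↷ X on a compact metrizable space, the naive mean dimension mdim^nv(Γ↷X) is either 0 or +∞. -/
open scoped ENNReal Pointwise
open Filter TensorProduct

/-- Lebesgue covering dimension, valued in `ℕ∞`. -/
noncomputable def covDim (X : Type*) [TopologicalSpace X] : ℕ∞ :=
  sInf {n : ℕ∞ | ∀ U : Set (Set X), (∀ u ∈ U, IsOpen u) → ⋃₀ U = Set.univ → U.Finite →
    ∃ V : Set (Set X), (∀ v ∈ V, IsOpen v) ∧ ⋃₀ V = Set.univ ∧ V.Finite ∧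
      (∀ v ∈ V, ∃ u ∈ U, v ⊆ u) ∧ ∀ x : X, ({v ∈ V | x ∈ v}.ncard : ℕ∞) ≤ n + 1}

/-- `Wdim_ε(X, ρ)`: the minimal covering dimension of a compact metrizable space `P`
admitting an `(ε,ρ)`-embedding `X → P`. -/
noncomputable def Wdim (X : Type*) [TopologicalSpace X] (ρ : X → X → ℝ) (ε : ℝ) : ℕ∞ :=
  sInf {n : ℕ∞ | ∃ (P : Type) (tP : TopologicalSpace P) (f : X → P),
    @CompactSpace P tP ∧ @TopologicalSpace.MetrizableSpace P tP ∧ @Continuous X P _ tP f ∧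
    (∀ x x', f x = f x' → ρ x x' < ε) ∧ n = @covDim P tP}

/-- `ρ_F(x,y) = max_{s ∈ F} ρ(s • x, s • y)`. -/
noncomputable def dynMetric {Γ X : Type*} [SMul Γ X] (ρ : X → X → ℝ) (F : Finset Γ) :
    X → X → ℝ :=
  fun x y => ⨆ s ∈ F, ρ (s • x) (s • y)

/-- `ρ` is a compatible metric on the topological space `X`. -/
def IsCompatibleMetric (X : Type*) [t : TopologicalSpace X] (ρ : X → X → ℝ) : Prop :=
  ∃ m : MetricSpace X, m.toUniformSpace.toTopologicalSpace = t ∧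
    ∀ x y, @dist X m.toPseudoMetricSpace.toDist x y = ρ x y

/-- Naive mean dimension of the action of `Γ` on `X`, computed with the metric `ρ`. -/
noncomputable def mdimNaive (Γ X : Type*) [Group Γ] [TopologicalSpace X] [MulAction Γ X]
    (ρ : X → X → ℝ) : ℝ≥0∞ :=
  ⨆ (ε : ℝ) (_ : 0 < ε), ⨅ (F : Finset Γ) (_ : F.Nonempty),
    (Wdim X (dynMetric ρ F) ε : ℝ≥0∞) / (F.card : ℝ≥0∞)

/-- Amenability of `Γ` (Følner condition). -/
def IsAmenable (Γ : Type*) [Group Γ] [DecidableEq Γ] : Prop :=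
  ∀ K : Finset Γ, K.Nonempty → ∀ δ : ℝ, 0 < δ →
    ∃ F : Finset Γ, F.Nonempty ∧ (((K * F) \ F).card : ℝ) < δ * F.card

section Aux

/-- Uniform continuity of a continuous self-map of a compact space, stated with an
explicit metric compatible with the given topology. -/
lemma unifAux {X : Type*} (m : MetricSpace X) (t : TopologicalSpace X)
    (ht : m.toUniformSpace.toTopologicalSpace = t) (hc : @CompactSpace X t)
    (φ : X → X) (hφ : @Continuous X X t t φ) {ε : ℝ} (hε : 0 < ε) :
    ∃ d, 0 < d ∧ ∀ x y, @dist X m.toPseudoMetricSpace.toDist x y < d →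
      @dist X m.toPseudoMetricSpace.toDist (φ x) (φ y) < ε := by
  subst ht
  letI := m
  haveI : CompactSpace X := hc
  have huc : UniformContinuous φ := CompactSpace.uniformContinuous_of_continuous hφ
  obtain ⟨d, hd, h⟩ := Metric.uniformContinuous_iff.mp huc ε hε
  exact ⟨d, hd, fun x y hxy => h hxy⟩

variable {Γ X : Type*} [Group Γ] [MulAction Γ X]

lemma dyn_lt {ρ : X → X → ℝ} (hρ0 : ∀ a b, 0 ≤ ρ a b) {F : Finset Γ} (hF : F.Nonempty)
    {x y : X} {ε : ℝ} (h : ∀ s ∈ F, ρ (s • x) (s • y) < ε) : dynMetric ρ F x y < ε := by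
  have hc0 : 0 ≤ F.sup' hF (fun s => ρ (s • x) (s • y)) := by
    obtain ⟨s, hs⟩ := hF
    exact le_trans (hρ0 _ _) (Finset.le_sup' (fun s => ρ (s • x) (s • y)) hs)
  have hcε : F.sup' hF (fun s => ρ (s • x) (s • y)) < ε := (Finset.sup'_lt_iff hF).mpr h
  have hle : dynMetric ρ F x y ≤ F.sup' hF (fun s => ρ (s • x) (s • y)) :=
    Real.iSup_le (fun s => Real.iSup_le
      (fun hs => Finset.le_sup' (fun s => ρ (s • x) (s • y)) hs) hc0) hc0
  exact lt_of_le_of_lt hle hcε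

lemma le_dyn {ρ : X → X → ℝ} (hρ0 : ∀ a b, 0 ≤ ρ a b) {F : Finset Γ} (hF : F.Nonempty)
    {x y : X} {s : Γ} (hs : s ∈ F) : ρ (s • x) (s • y) ≤ dynMetric ρ F x y := by
  have hc0 : 0 ≤ F.sup' hF (fun s => ρ (s • x) (s • y)) := by
    obtain ⟨s', hs'⟩ := hF
    exact le_trans (hρ0 _ _) (Finset.le_sup' (fun s => ρ (s • x) (s • y)) hs')
  have hbdd : BddAbove (Set.range fun s : Γ => ⨆ (_ : s ∈ F), ρ (s • x) (s • y)) := by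
    refine ⟨F.sup' hF (fun s => ρ (s • x) (s • y)), ?_⟩
    rintro _ ⟨t, rfl⟩
    exact Real.iSup_le (fun ht => Finset.le_sup' (fun s => ρ (s • x) (s • y)) ht) hc0
  calc ρ (s • x) (s • y) = ⨆ (_ : s ∈ F), ρ (s • x) (s • y) :=
      (ciSup_pos (f := fun _ : s ∈ F => ρ (s • x) (s • y)) hs).symm
    _ ≤ dynMetric ρ F x y := le_ciSup hbdd s

lemma Wdim_le_Wdim {Y : Type*} [TopologicalSpace Y] {ρ₁ ρ₂ : Y → Y → ℝ} {ε₁ ε₂ : ℝ}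
    (h : ∀ x y, ρ₂ x y < ε₂ → ρ₁ x y < ε₁) : Wdim Y ρ₁ ε₁ ≤ Wdim Y ρ₂ ε₂ := by
  apply sInf_le_sInf
  rintro n ⟨P, tP, f, h1, h2, h3, h4, h5⟩
  exact ⟨P, tP, f, h1, h2, h3, fun x x' hf => h x x' (h4 x x' hf), h5⟩

end Aux

/-- **Proposition (Liang–Yan, Proposition 3.4).** For a continuous action of a countable
nonamenable group on a compact metrizable space, the naive mean dimension is `0` or `∞`. -/
theorem naive_mdim_zero_or_top_of_nonamenable
    (Γ X : Type*) [Group Γ] [Countable Γ] [DecidableEq Γ]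
    [TopologicalSpace X] [CompactSpace X] [TopologicalSpace.MetrizableSpace X]
    [MulAction Γ X] [ContinuousConstSMul Γ X]
    (hΓ : ¬ IsAmenable Γ) (ρ : X → X → ℝ) (hρ : IsCompatibleMetric X ρ) :
    mdimNaive Γ X ρ = 0 ∨ mdimNaive Γ X ρ = ⊤ := by
  obtain ⟨m, hmt, hmd⟩ := hρ
  have hρ0 : ∀ a b, 0 ≤ ρ a b := by
    intro a b
    have := @dist_nonneg X m.toPseudoMetricSpace a b
    rwa [hmd] at this
  rw [IsAmenable] at hΓ
  push_neg at hΓ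
  obtain ⟨K, hK, δ, hδ, hKδ⟩ := hΓ
  -- hKδ : ∀ F, F.Nonempty → δ * F.card ≤ ((K*F)\F).card
  set r : ℝ≥0∞ := ENNReal.ofReal (1 + δ) with hr
  have hr1 : 1 < r := by
    rw [hr, ← ENNReal.ofReal_one]
    exact (ENNReal.ofReal_lt_ofReal_iff (by linarith)).mpr (by linarith)
  -- uniform continuity of the action elements
  have hunif : ∀ ε : ℝ, 0 < ε → ∃ ε' : ℝ, 0 < ε' ∧ ε' ≤ ε ∧
      ∀ x y : X, ρ x y < ε' → ∀ k ∈ K, ρ (k • x) (k • y) < ε := by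
    intro ε hε
    have hk' : ∀ k : Γ, ∃ d, 0 < d ∧ ∀ x y, ρ x y < d → ρ (k • x) (k • y) < ε := by
      intro k
      obtain ⟨d, hd, h⟩ := unifAux m _ hmt inferInstance _ (continuous_const_smul k) hε
      refine ⟨d, hd, fun x y hxy => ?_⟩
      have := h x y (by rwa [hmd])
      rwa [hmd] at this
    choose dfun hd0 hdp using hk'
    refine ⟨min ε (K.inf' hK dfun), lt_min hε ((Finset.lt_inf'_iff hK).mpr fun k _ => hd0 k),
      min_le_left _ _, ?_⟩
    intro x y hxy k hk
    exact hdp k x y (lt_of_lt_of_le hxy (le_trans (min_le_right _ _) (Finset.inf'_le _ hk)))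
  set c : ℝ → ℝ≥0∞ := fun ε => ⨅ (F : Finset Γ) (_ : F.Nonempty),
    (Wdim X (dynMetric ρ F) ε : ℝ≥0∞) / (F.card : ℝ≥0∞) with hcdef
  have hM : mdimNaive Γ X ρ = ⨆ (ε : ℝ) (_ : 0 < ε), c ε := rfl
  -- key step
  have hstep : ∀ ε : ℝ, 0 < ε → ∃ ε', 0 < ε' ∧ r * c ε ≤ c ε' := by
    intro ε hε
    obtain ⟨ε', hε'0, hε'ε, hεK⟩ := hunif ε hε
    refine ⟨ε', hε'0, ?_⟩
    rw [hcdef]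
    refine le_iInf fun F => le_iInf fun hF => ?_
    set G := F ∪ K * F with hG
    have hFG : F ⊆ G := Finset.subset_union_left
    have hGne : G.Nonempty := hF.mono hFG
    have hWle : Wdim X (dynMetric ρ G) ε ≤ Wdim X (dynMetric ρ F) ε' := by
      apply Wdim_le_Wdim
      intro x y hxy
      refine dyn_lt hρ0 hGne ?_
      intro t ht
      rcases Finset.mem_union.mp ht with ht | ht
      · exact lt_of_lt_of_le (lt_of_le_of_lt (le_dyn hρ0 hF ht) hxy) hε'ε
      · obtain ⟨k, hk, s, hs, rfl⟩ := Finset.mem_mul.mp ht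
        rw [mul_smul, mul_smul]
        exact hεK _ _ (lt_of_le_of_lt (le_dyn hρ0 hF hs) hxy) k hk
    have hFc0 : (F.card : ℝ≥0∞) ≠ 0 := by
      simpa using Finset.card_ne_zero.mpr hF
    have hFtop : (F.card : ℝ≥0∞) ≠ ⊤ := ENNReal.natCast_ne_top _
    have hcard : r * (F.card : ℝ≥0∞) ≤ (G.card : ℝ≥0∞) := by
      have h1 : (1 + δ) * (F.card : ℝ) ≤ (G.card : ℝ) := by
        have h2 : ((K * F) \ F).card + F.card = ((K * F) ∪ F).card :=
          Finset.card_sdiff_add_card _ _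
        have h3 : G.card = ((K * F) \ F).card + F.card := by
          rw [hG, Finset.union_comm]; exact h2.symm
        rw [h3]
        push_cast
        have := hKδ F hF
        linarith
      calc r * (F.card : ℝ≥0∞) = ENNReal.ofReal ((1 + δ) * (F.card : ℝ)) := by
            rw [ENNReal.ofReal_mul (by linarith), ENNReal.ofReal_natCast]
        _ ≤ ENNReal.ofReal (G.card : ℝ) := ENNReal.ofReal_le_ofReal h1
        _ = (G.card : ℝ≥0∞) := ENNReal.ofReal_natCast _
    have h3 : c ε ≤ (Wdim X (dynMetric ρ G) ε : ℝ≥0∞) / (G.card : ℝ≥0∞) := by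
      rw [hcdef]
      exact iInf_le_of_le G (iInf_le_of_le hGne le_rfl)
    have hmid : ∀ W : ℝ≥0∞, r * (W / (G.card : ℝ≥0∞)) ≤ W / (F.card : ℝ≥0∞) := by
      intro W
      rw [ENNReal.le_div_iff_mul_le (Or.inl hFc0) (Or.inl hFtop)]
      have heq : r * (W / (G.card : ℝ≥0∞)) * (F.card : ℝ≥0∞)
          = W / (G.card : ℝ≥0∞) * (r * (F.card : ℝ≥0∞)) := by ring
      rw [heq]
      calc W / (G.card : ℝ≥0∞) * (r * (F.card : ℝ≥0∞))
          ≤ W / (G.card : ℝ≥0∞) * (G.card : ℝ≥0∞) := mul_le_mul_right hcard _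
        _ ≤ W := by rw [mul_comm]; exact ENNReal.mul_div_le
    calc r * c ε ≤ r * ((Wdim X (dynMetric ρ G) ε : ℝ≥0∞) / (G.card : ℝ≥0∞)) :=
          mul_le_mul_right h3 r
      _ ≤ (Wdim X (dynMetric ρ G) ε : ℝ≥0∞) / (F.card : ℝ≥0∞) := hmid _
      _ ≤ (Wdim X (dynMetric ρ F) ε' : ℝ≥0∞) / (F.card : ℝ≥0∞) := by
          apply ENNReal.div_le_div_right
          exact_mod_cast hWle
  have hMle : r * mdimNaive Γ X ρ ≤ mdimNaive Γ X ρ := by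
    conv_lhs => rw [hM]
    rw [ENNReal.mul_iSup]
    refine iSup_le fun ε => ?_
    rw [ENNReal.mul_iSup]
    refine iSup_le fun hε => ?_
    obtain ⟨ε', hε'0, hle⟩ := hstep ε hε
    refine le_trans hle ?_
    rw [hM]
    exact le_iSup₂ (f := fun ε (_ : 0 < ε) => c ε) ε' hε'0
  rcases eq_or_ne (mdimNaive Γ X ρ) 0 with h0 | h0
  · exact Or.inl h0
  · refine Or.inr ?_
    by_contra htop
    have : r ≤ 1 := (ENNReal.mul_le_mul_iff_left h0 htop).mp (by rw [one_mul]; exact hMle)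
    exact absurd this (not_le.mpr hr1)
end

section
/- Let Γ be any countable group. Fix 0 < τ < 1, 0 ≤ η < 1 and a nonempty finite subset F ⊆ Γ. Suppose a map σ : Γ → Sym(d) admits a subset B ⊆ [d] = {1,…,d} with |B| ≥ (1 − τ/(2(|F|+1)))·d such that for every v ∈ B and all distinct s, t ∈ F ∪ F^{-1}: σ_s(v) ≠ σ_t(v) and σ_{s^{-1}}(v) = (σ_s)^{-1}(v). Then for every subset W ⊆ [d] with |W| ≥ (1 − η/(|F|+1))·d, there exist ℓ ∈ ℕ, subsets F_1, …, F_ℓ ⊆ F and points c_1, …, c_ℓ ∈ W such that: (i) |F_k| ≥ τ|F|/2 for every k = 1, …, ℓ; and (ii) the sets σ(F_1)c_1, …, σ(F_ℓ)c_ℓ (where σ(F_k)c_k = {σ_s(c_k) : s ∈ F_k}) are pairwise disjoint and their union has cardinality at least (1 − τ − η)·d. -/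
open scoped ENNReal Pointwise
open Filter TensorProduct

private lemma assigning_arith (τ η M a v d w b : ℝ)
    (hτ0 : 0 < τ) (hτ1 : τ < 1) (hη0 : 0 ≤ η) (hη1 : η < 1)
    (hM2 : 2 ≤ M) (hd1 : 1 ≤ d) (ha0 : 0 ≤ a)
    (hWM : (M - η) * d ≤ w * M) (hBM : (2 * M - τ) * d ≤ 2 * b * M)
    (hA : w + b - d ≤ a)
    (hdiv : a * (1 - τ/2) < v) (hV : v < (1 - τ - η) * d) : False := by
  have h2aM : (2 * M - 2 * η - τ) * d ≤ 2 * a * M := by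
    have h' := mul_le_mul_of_nonneg_right hA (by linarith : (0:ℝ) ≤ 2 * M)
    nlinarith
  have ha2 : a * (2 - τ) < 2 * (1 - τ - η) * d := by linarith
  nlinarith [mul_le_mul_of_nonneg_right h2aM (by linarith : (0:ℝ) ≤ 2 - τ),
    mul_lt_mul_of_pos_left ha2 (by linarith : (0:ℝ) < M),
    mul_nonneg (mul_nonneg (by linarith : (0:ℝ) ≤ M - 1) (le_of_lt hτ0)) (by linarith : (0:ℝ) ≤ d),
    mul_nonneg (mul_nonneg (by linarith : (0:ℝ) ≤ M - 1) hη0) (by linarith : (0:ℝ) ≤ d),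
    mul_nonneg (mul_nonneg hη0 (le_of_lt hτ0)) (by linarith : (0:ℝ) ≤ d),
    mul_nonneg (mul_nonneg (le_of_lt hτ0) (le_of_lt hτ0)) (by linarith : (0:ℝ) ≤ d)]

/-- **Lemma (Liang–Yan, Lemma 3.10).** The combinatorial "assigning" lemma. -/
theorem assigning_lemma
    (Γ : Type*) [Group Γ] [Countable Γ] [DecidableEq Γ]
    (τ η : ℝ) (hτ0 : 0 < τ) (hτ1 : τ < 1) (hη0 : 0 ≤ η) (hη1 : η < 1)
    (F : Finset Γ) (hF : F.Nonempty)
    (d : ℕ) (σ : Γ → Equiv.Perm (Fin d)) (B : Finset (Fin d))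
    (hBcard : (1 - τ / (2 * ((F.card : ℝ) + 1))) * d ≤ (B.card : ℝ))
    (hBsep : ∀ v ∈ B, ∀ s ∈ F ∪ F⁻¹, ∀ t ∈ F ∪ F⁻¹, s ≠ t → σ s v ≠ σ t v)
    (hBinv : ∀ v ∈ B, ∀ s ∈ F ∪ F⁻¹, σ s⁻¹ v = (σ s)⁻¹ v)
    (W : Finset (Fin d)) (hW : (1 - η / ((F.card : ℝ) + 1)) * d ≤ (W.card : ℝ)) :
    ∃ (ℓ : ℕ) (Fk : Fin ℓ → Finset Γ) (c : Fin ℓ → Fin d),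
      (∀ k, Fk k ⊆ F) ∧ (∀ k, c k ∈ W) ∧
      (∀ k, τ * (F.card : ℝ) / 2 ≤ ((Fk k).card : ℝ)) ∧
      (∀ k k', k ≠ k' →
        Disjoint ((Fk k).image fun s => σ s (c k)) ((Fk k').image fun s => σ s (c k'))) ∧
      (1 - τ - η) * d ≤
        (((Finset.univ : Finset (Fin ℓ)).biUnion
          (fun k => (Fk k).image fun s => σ s (c k))).card : ℝ) := by
  classical
  have hm : (1:ℝ) ≤ F.card := by exact_mod_cast Finset.card_pos.mpr hF
  have hm0 : (0:ℝ) < F.card := by linarith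
  have hinj : ∀ v ∈ B, Set.InjOn (fun s => σ s v) (F : Set Γ) := by
    intro v hv s hs t ht hst
    by_contra h
    exact hBsep v hv s (Finset.mem_union_left _ hs) t (Finset.mem_union_left _ ht) h hst
  have key : ∀ n : ℕ, ∀ (ℓ : ℕ) (Fk : Fin ℓ → Finset Γ) (c : Fin ℓ → Fin d),
      (∀ k, Fk k ⊆ F) → (∀ k, c k ∈ W) →
      (∀ k, τ * (F.card : ℝ) / 2 ≤ ((Fk k).card : ℝ)) →
      (∀ k k', k ≠ k' →
        Disjoint ((Fk k).image fun s => σ s (c k)) ((Fk k').image fun s => σ s (c k'))) →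
      d ≤ (((Finset.univ : Finset (Fin ℓ)).biUnion
          (fun k => (Fk k).image fun s => σ s (c k))).card) + n →
      ∃ (ℓ' : ℕ) (Fk' : Fin ℓ' → Finset Γ) (c' : Fin ℓ' → Fin d),
      (∀ k, Fk' k ⊆ F) ∧ (∀ k, c' k ∈ W) ∧
      (∀ k, τ * (F.card : ℝ) / 2 ≤ ((Fk' k).card : ℝ)) ∧
      (∀ k k', k ≠ k' →
        Disjoint ((Fk' k).image fun s => σ s (c' k)) ((Fk' k').image fun s => σ s (c' k'))) ∧
      (1 - τ - η) * d ≤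
        (((Finset.univ : Finset (Fin ℓ')).biUnion
          (fun k => (Fk' k).image fun s => σ s (c' k))).card : ℝ) := by
    intro n
    induction n with
    | zero =>
      intro ℓ Fk c h1 h2 h3 h4 h5
      refine ⟨ℓ, Fk, c, h1, h2, h3, h4, ?_⟩
      have : (d:ℝ) ≤ (((Finset.univ : Finset (Fin ℓ)).biUnion
          (fun k => (Fk k).image fun s => σ s (c k))).card : ℝ) := by
        exact_mod_cast (by omega : d ≤ ((Finset.univ : Finset (Fin ℓ)).biUnion
          (fun k => (Fk k).image fun s => σ s (c k))).card)
      nlinarith [Nat.cast_nonneg (α := ℝ) d]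
    | succ n ih =>
      intro ℓ Fk c h1 h2 h3 h4 h5
      set V := ((Finset.univ : Finset (Fin ℓ)).biUnion
          (fun k => (Fk k).image fun s => σ s (c k))) with hVdef
      by_cases hV : (1 - τ - η) * d ≤ (V.card : ℝ)
      · exact ⟨ℓ, Fk, c, h1, h2, h3, h4, hV⟩
      push_neg at hV
      have hVd : (0:ℝ) ≤ V.card := Nat.cast_nonneg _
      have hd0 : 0 < d := by
        by_contra h
        have hdd : d = 0 := by omega
        have hdr : (d:ℝ) = 0 := by exact_mod_cast hdd
        rw [hdr] at hV
        simp at hV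
        linarith
      have hd1 : (1:ℝ) ≤ d := by exact_mod_cast hd0
      set A := W ∩ B with hAdef
      set M := (F.card : ℝ) + 1 with hMdef
      have hM0 : (0:ℝ) < M := by rw [hMdef]; linarith
      have hM2 : (2:ℝ) ≤ M := by rw [hMdef]; linarith
      have hWM : (M - η) * d ≤ (W.card : ℝ) * M := by
        have h' := mul_le_mul_of_nonneg_right hW (le_of_lt hM0)
        have heq : (1 - η / M) * d * M = (M - η) * d := by
          field_simp
        rw [heq] at h'
        exact h'
      have hBM : (2 * M - τ) * d ≤ 2 * (B.card : ℝ) * M := by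
        have h' := mul_le_mul_of_nonneg_right hBcard (by linarith : (0:ℝ) ≤ 2 * M)
        have heq : (1 - τ / (2 * M)) * d * (2 * M) = (2 * M - τ) * d := by
          field_simp
        rw [heq] at h'
        linarith
      have hAcard : (W.card : ℝ) + B.card - d ≤ A.card := by
        have h1' := Finset.card_inter_add_card_union W B
        have h2' : (W ∪ B).card ≤ d := by
          simpa using Finset.card_le_univ (W ∪ B)
        have h3' : W.card + B.card ≤ A.card + d := by
          rw [hAdef]; omega
        have h4' : (W.card : ℝ) + B.card ≤ (A.card : ℝ) + d := by exact_mod_cast h3'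
        linarith
      have hApos : (0:ℝ) < A.card := by nlinarith
      have hAne : A.Nonempty := by
        rw [← Finset.card_pos]
        exact_mod_cast hApos
      -- find a good point c0
      have hex : ∃ c0 ∈ A, ((F.filter fun s => σ s c0 ∈ V).card : ℝ) ≤ (1 - τ/2) * F.card := by
        by_contra h
        push_neg at h
        have hsum1 : ∑ v ∈ A, ((F.filter fun s => σ s v ∈ V).card)
            = ∑ s ∈ F, ((A.filter fun v => σ s v ∈ V).card) := by
          simp_rw [Finset.card_filter]
          exact Finset.sum_comm
        have hsum2 : ∑ s ∈ F, ((A.filter fun v => σ s v ∈ V).card) ≤ F.card * V.card := by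
          calc ∑ s ∈ F, ((A.filter fun v => σ s v ∈ V).card)
              ≤ ∑ _s ∈ F, V.card := by
                apply Finset.sum_le_sum
                intro s _
                apply Finset.card_le_card_of_injOn (fun v => σ s v)
                · intro v hv; exact (Finset.mem_filter.mp hv).2
                · intro a _ b _ hab; exact (σ s).injective hab
            _ = F.card * V.card := by rw [Finset.sum_const, smul_eq_mul]
        have hlow : (A.card : ℝ) * ((1 - τ/2) * F.card)
            < ∑ v ∈ A, (((F.filter fun s => σ s v ∈ V).card : ℝ)) := by
          have := Finset.sum_lt_sum_of_nonempty hAne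
            (f := fun _ => (1 - τ/2) * (F.card : ℝ))
            (g := fun v => (((F.filter fun s => σ s v ∈ V).card : ℝ))) (fun v hv => h v hv)
          simpa [Finset.sum_const, mul_comm] using this
        have hup : (∑ v ∈ A, (((F.filter fun s => σ s v ∈ V).card : ℝ)))
            ≤ (F.card : ℝ) * V.card := by
          have : ((∑ v ∈ A, ((F.filter fun s => σ s v ∈ V).card) : ℕ) : ℝ)
              ≤ ((F.card * V.card : ℕ) : ℝ) := by
            exact_mod_cast hsum1 ▸ hsum2
          push_cast at this
          simpa using this
        -- so A.card * (1 - τ/2) < V.card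
        have hstep : ((A.card : ℝ) * (1 - τ/2)) * F.card < (V.card : ℝ) * F.card := by
          linarith [hlow, hup]
        have hdiv : (A.card : ℝ) * (1 - τ/2) < V.card :=
          lt_of_mul_lt_mul_right hstep (by linarith)
        -- contradiction
        exact assigning_arith τ η M (A.card) (V.card) d (W.card) (B.card)
          hτ0 hτ1 hη0 hη1 hM2 hd1 (Nat.cast_nonneg _) hWM hBM hAcard hdiv hV
      obtain ⟨c0, hc0A, hc0⟩ := hex
      have hc0W : c0 ∈ W := (Finset.mem_inter.mp hc0A).1
      have hc0B : c0 ∈ B := (Finset.mem_inter.mp hc0A).2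
      set F' := F.filter (fun s => σ s c0 ∉ V) with hF'def
      have hF'sub : F' ⊆ F := Finset.filter_subset _ _
      have hF'card : τ * (F.card : ℝ) / 2 ≤ (F'.card : ℝ) := by
        have hsplit : (F.filter fun s => σ s c0 ∈ V).card + F'.card = F.card := by
          rw [hF'def]
          exact Finset.card_filter_add_card_filter_not _
        have : ((F.filter fun s => σ s c0 ∈ V).card : ℝ) + F'.card = F.card := by
          exact_mod_cast hsplit
        linarith
      have hdisjV : Disjoint (F'.image fun s => σ s c0) V := by
        rw [Finset.disjoint_left]
        intro x hx
        obtain ⟨s, hs, rfl⟩ := Finset.mem_image.mp hx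
        exact (Finset.mem_filter.mp hs).2
      have himcard : (F'.image fun s => σ s c0).card = F'.card := by
        apply Finset.card_image_of_injOn
        exact (hinj c0 hc0B).mono (by exact_mod_cast hF'sub)
      have hF'pos : 0 < F'.card := by
        by_contra h
        have : F'.card = 0 := by omega
        rw [this] at hF'card
        simp at hF'card
        nlinarith
      -- build new family
      refine ih (ℓ + 1) (Fin.cons F' Fk) (Fin.cons c0 c) ?_ ?_ ?_ ?_ ?_
      · intro k
        refine Fin.cases ?_ ?_ k
        · simpa using hF'sub
        · intro j; simpa using h1 j
      · intro k
        refine Fin.cases ?_ ?_ k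
        · simpa using hc0W
        · intro j; simpa using h2 j
      · intro k
        refine Fin.cases ?_ ?_ k
        · simpa using hF'card
        · intro j; simpa using h3 j
      · intro k k' hkk'
        rcases Fin.eq_zero_or_eq_succ k with rfl | ⟨j, rfl⟩ <;>
          rcases Fin.eq_zero_or_eq_succ k' with rfl | ⟨j', rfl⟩
        · exact absurd rfl hkk'
        · simp only [Fin.cons_zero, Fin.cons_succ]
          exact hdisjV.mono_right
            (Finset.subset_biUnion_of_mem (fun k => (Fk k).image fun s => σ s (c k))
              (Finset.mem_univ j'))
        · simp only [Fin.cons_zero, Fin.cons_succ]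
          exact (hdisjV.mono_right
            (Finset.subset_biUnion_of_mem (fun k => (Fk k).image fun s => σ s (c k))
              (Finset.mem_univ j))).symm
        · simp only [Fin.cons_succ]
          exact h4 j j' (fun h => hkk' (by rw [h]))
      · have hunion : ((Finset.univ : Finset (Fin (ℓ+1))).biUnion
            (fun k => (((Fin.cons F' Fk : Fin (ℓ+1) → Finset Γ) k).image
              fun s => σ s ((Fin.cons c0 c : Fin (ℓ+1) → Fin d) k))))
            = (F'.image fun s => σ s c0) ∪ V := by
          ext x
          simp only [Finset.mem_biUnion, Finset.mem_union, Finset.mem_univ, true_and,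
            hVdef, Fin.exists_fin_succ, Fin.cons_zero, Fin.cons_succ]
        rw [hunion, Finset.card_union_of_disjoint hdisjV, himcard]
        omega
  have h0 : d ≤ (((Finset.univ : Finset (Fin 0)).biUnion
      (fun k => ((Fin.elim0 k : Finset Γ)).image fun s => σ s (Fin.elim0 k))).card) + d := by
    simp
  exact key d 0 Fin.elim0 Fin.elim0 (fun k => k.elim0) (fun k => k.elim0)
    (fun k => k.elim0) (fun k => k.elim0) h0
end

section
/- Let Γ be a countable nonamenable group and M any ZΓ-module. Then the naive mean rank mrk^nv(M) is either 0 or +∞. -/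
open scoped ENNReal Pointwise
open Filter TensorProduct

/-- Rank of an abelian group: `dim_ℚ (ℚ ⊗_ℤ A)`, valued in `ℕ∞`. -/
noncomputable def addRank (A : Type*) [AddCommGroup A] : ℕ∞ :=
  Cardinal.toENat (Module.rank ℚ (ℚ ⊗[ℤ] A))

/-- `A^F = Σ_{s ∈ F} s⁻¹ A` for a subgroup `A` of a `ℤΓ`-module `M`. -/
noncomputable def subgroupSpan {Γ M : Type*} [Group Γ] [AddCommGroup M] [DistribMulAction Γ M]
    (A : AddSubgroup M) (F : Finset Γ) : AddSubgroup M :=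
  ⨆ s ∈ F, s⁻¹ • A

/-- Naive mean rank of the `ℤΓ`-module `M`. -/
noncomputable def mrkNaive (Γ M : Type*) [Group Γ] [AddCommGroup M] [DistribMulAction Γ M] :
    ℝ≥0∞ :=
  ⨆ (A : AddSubgroup M) (_ : A.FG), ⨅ (F : Finset Γ) (_ : F.Nonempty),
    (addRank (subgroupSpan A F) : ℝ≥0∞) / (F.card : ℝ≥0∞)

section Aux

variable {Γ M : Type*} [Group Γ] [AddCommGroup M] [DistribMulAction Γ M]

lemma smul_iSup_addSubgroup (a : Γ) {ι : Sort*} (f : ι → AddSubgroup M) :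
    a • (⨆ i, f i) = ⨆ i, a • f i := by
  simp only [AddSubgroup.pointwise_smul_def]
  exact AddSubgroup.map_iSup _ _

lemma fg_sup_addSubgroup {A B : AddSubgroup M} (hA : A.FG) (hB : B.FG) : (A ⊔ B).FG := by
  rw [AddSubgroup.fg_iff] at hA hB ⊢
  obtain ⟨S, hS, hSf⟩ := hA; obtain ⟨T, hT, hTf⟩ := hB
  exact ⟨S ∪ T, by rw [AddSubgroup.closure_union, hS, hT], hSf.union hTf⟩

lemma fg_smul_addSubgroup {A : AddSubgroup M} (hA : A.FG) (a : Γ) : (a • A).FG := by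
  rw [AddSubgroup.fg_iff] at hA ⊢
  obtain ⟨S, hS, hSf⟩ := hA
  refine ⟨a • S, ?_, hSf.smul_set⟩
  rw [AddSubgroup.pointwise_smul_def, ← hS]
  exact (AddMonoidHom.map_closure (DistribMulAction.toAddMonoidEnd Γ M a : M →+ M) S).symm

lemma subgroupSpan_fg [DecidableEq Γ] {A : AddSubgroup M} (hA : A.FG) (F : Finset Γ) :
    (subgroupSpan A F).FG := by
  classical
  induction F using Finset.induction_on with
  | empty =>
      have : subgroupSpan A (∅ : Finset Γ) = ⊥ := by simp [subgroupSpan]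
      rw [this]
      exact ⟨∅, by simp⟩
  | @insert a F ha ih =>
      have : subgroupSpan A (insert a F) = a⁻¹ • A ⊔ subgroupSpan A F := by
        unfold subgroupSpan
        exact Finset.iSup_insert a F _
      rw [this]
      exact fg_sup_addSubgroup (fg_smul_addSubgroup hA a⁻¹) ih

lemma subgroupSpan_mul [DecidableEq Γ] (A : AddSubgroup M) (K F : Finset Γ) :
    subgroupSpan (subgroupSpan A K) F = subgroupSpan A (K * F) := by
  unfold subgroupSpan
  apply le_antisymm
  · refine iSup₂_le fun s hs => ?_
    simp only [smul_iSup_addSubgroup]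
    refine iSup₂_le fun t ht => ?_
    rw [smul_smul, ← mul_inv_rev]
    exact le_iSup₂ (f := fun u (_ : u ∈ K * F) => u⁻¹ • A) (t * s) (Finset.mul_mem_mul ht hs)
  · refine iSup₂_le fun u hu => ?_
    obtain ⟨t, ht, s, hs, rfl⟩ := Finset.mem_mul.mp hu
    refine le_trans ?_
      (le_iSup₂ (f := fun s (_ : s ∈ F) => s⁻¹ • (⨆ t ∈ K, t⁻¹ • A)) s hs)
    rw [mul_inv_rev, ← smul_smul]
    exact AddSubgroup.pointwise_smul_le_pointwise_smul_iff.mpr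
      (le_iSup₂ (f := fun t (_ : t ∈ K) => t⁻¹ • A) t ht)

end Aux

/-- **Proposition (Liang–Yan, Proposition 4.4).** For a `ℤΓ`-module over a countable
nonamenable group, the naive mean rank is `0` or `∞`. -/
theorem naive_mrk_zero_or_top_of_nonamenable
    (Γ M : Type*) [Group Γ] [Countable Γ] [DecidableEq Γ]
    [AddCommGroup M] [DistribMulAction Γ M]
    (hΓ : ¬ IsAmenable Γ) :
    mrkNaive Γ M = 0 ∨ mrkNaive Γ M = ⊤ := by
  by_contra hcon
  push_neg at hcon
  obtain ⟨h0, htop⟩ := hcon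
  rw [IsAmenable] at hΓ
  push_neg at hΓ
  obtain ⟨K₀, hK₀, δ, hδ, hFol⟩ := hΓ
  -- enlarge K₀ to contain 1
  set K : Finset Γ := insert 1 K₀ with hK
  have h1K : (1 : Γ) ∈ K := Finset.mem_insert_self 1 K₀
  have hFol' : ∀ F : Finset Γ, F.Nonempty → δ * F.card ≤ (((K * F) \ F).card : ℝ) := by
    intro F hF
    have h₁ := hFol F hF
    refine h₁.trans ?_
    have hsub : (K₀ * F) \ F ⊆ (K * F) \ F :=
      Finset.sdiff_subset_sdiff
        (Finset.mul_subset_mul_right (Finset.subset_insert 1 K₀)) le_rfl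
    exact_mod_cast Finset.card_le_card hsub
  set ε : ℝ≥0∞ := ENNReal.ofReal δ with hε
  have hεpos : 0 < ε := ENNReal.ofReal_pos.mpr hδ
  -- cardinality estimate: (1+ε) * |F| ≤ |K*F|
  have hcard : ∀ F : Finset Γ, F.Nonempty →
      (1 + ε) * (F.card : ℝ≥0∞) ≤ ((K * F).card : ℝ≥0∞) := by
    intro F hF
    have hFsub : F ⊆ K * F := by
      intro f hf
      simpa using Finset.mul_mem_mul h1K hf
    have hcards : ((K * F) \ F).card + F.card = (K * F).card :=
      Finset.card_sdiff_add_card_eq_card hFsub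
    have h2 : ε * (F.card : ℝ≥0∞) ≤ (((K * F) \ F).card : ℝ≥0∞) := by
      have := hFol' F hF
      calc ε * (F.card : ℝ≥0∞) = ENNReal.ofReal (δ * F.card) := by
            rw [ENNReal.ofReal_mul hδ.le, ENNReal.ofReal_natCast]
        _ ≤ ENNReal.ofReal (((K * F) \ F).card : ℝ) := ENNReal.ofReal_le_ofReal this
        _ = (((K * F) \ F).card : ℝ≥0∞) := ENNReal.ofReal_natCast _
    calc (1 + ε) * (F.card : ℝ≥0∞) = (F.card : ℝ≥0∞) + ε * F.card := by ring
      _ ≤ (F.card : ℝ≥0∞) + (((K * F) \ F).card : ℝ≥0∞) := by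
          exact add_le_add_right h2 _
      _ = ((K * F).card : ℝ≥0∞) := by
          rw [← hcards]; push_cast; ring
  -- key inequality: (1+ε) * mrk ≤ mrk
  have key : (1 + ε) * mrkNaive Γ M ≤ mrkNaive Γ M := by
    conv_lhs => rw [mrkNaive]
    simp only [ENNReal.mul_iSup]
    refine iSup₂_le fun A hA => ?_
    set c : ℝ≥0∞ := ⨅ (F : Finset Γ) (_ : F.Nonempty),
      (addRank (subgroupSpan A F) : ℝ≥0∞) / (F.card : ℝ≥0∞) with hc
    have hstep : (1 + ε) * c ≤ ⨅ (F : Finset Γ) (_ : F.Nonempty),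
        (addRank (subgroupSpan (subgroupSpan A K) F) : ℝ≥0∞) / (F.card : ℝ≥0∞) := by
      refine le_iInf₂ fun F hF => ?_
      rw [subgroupSpan_mul]
      have hKF : (K * F).Nonempty := ⟨1 * hF.choose, Finset.mul_mem_mul h1K hF.choose_spec⟩
      have hKFcard0 : ((K * F).card : ℝ≥0∞) ≠ 0 := by
        exact_mod_cast Finset.card_ne_zero_of_mem (Finset.mul_mem_mul h1K hF.choose_spec)
      have hc1 : c ≤ (addRank (subgroupSpan A (K * F)) : ℝ≥0∞) / ((K * F).card : ℝ≥0∞) :=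
        iInf₂_le (K * F) hKF
      have hc2 : c * ((K * F).card : ℝ≥0∞) ≤ (addRank (subgroupSpan A (K * F)) : ℝ≥0∞) :=
        (ENNReal.le_div_iff_mul_le (Or.inl hKFcard0) (Or.inl (ENNReal.natCast_ne_top _))).mp hc1
      have hFcard0 : ((F.card : ℝ≥0∞)) ≠ 0 := by
        exact_mod_cast Finset.card_ne_zero_of_mem hF.choose_spec
      rw [ENNReal.le_div_iff_mul_le (Or.inl hFcard0) (Or.inl (ENNReal.natCast_ne_top _))]
      calc (1 + ε) * c * (F.card : ℝ≥0∞) = c * ((1 + ε) * (F.card : ℝ≥0∞)) := by ring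
        _ ≤ c * ((K * F).card : ℝ≥0∞) := mul_le_mul_right (hcard F hF) c
        _ ≤ (addRank (subgroupSpan A (K * F)) : ℝ≥0∞) := hc2
    refine hstep.trans ?_
    rw [mrkNaive]
    exact le_iSup₂ (f := fun (B : AddSubgroup M) (_ : B.FG) =>
        ⨅ (F : Finset Γ) (_ : F.Nonempty),
          (addRank (subgroupSpan B F) : ℝ≥0∞) / (F.card : ℝ≥0∞))
      (subgroupSpan A K) (subgroupSpan_fg hA K)
  -- derive the contradiction
  have hlt : mrkNaive Γ M < (1 + ε) * mrkNaive Γ M := by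
    have h1 : (1 : ℝ≥0∞) < 1 + ε := ENNReal.lt_add_right ENNReal.one_ne_top hεpos.ne'
    calc mrkNaive Γ M = 1 * mrkNaive Γ M := (one_mul _).symm
      _ < (1 + ε) * mrkNaive Γ M := ENNReal.mul_lt_mul_left h0 htop h1
  exact absurd key (not_le.mpr hlt)
end

section
/- Let Γ be a sofic group with sofic approximation Σ, let Γ ↷ X be a continuous action on a compact metrizable space, and let ρ be a compatible metric on X. Suppose that the naive metric mean dimension mdim_M^nv(Γ↷X, ρ) = 0 and, moreover, that liminf_{ε→0} [h_ε^nv(ρ)/|log ε|] · [log N_ε(X,ρ)/|log ε|] = 0. Then the sofic metric mean dimension satisfies mdim_{Σ,M}(Γ↷X, ρ) ≤ 0. -/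
open scoped ENNReal Pointwise
open Filter TensorProduct
set_option maxHeartbeats 1000000

/-- Maximal cardinality of an `(ε,ρ)`-separated subset of `X`. -/
noncomputable def sepNum (X : Type*) (ρ : X → X → ℝ) (ε : ℝ) : ℕ∞ :=
  ⨆ (Z : Set X) (_ : ∀ z ∈ Z, ∀ z' ∈ Z, z ≠ z' → ε ≤ ρ z z'), Z.encard

/-- Logarithm `ℕ∞ → ℝ≥0∞`. -/
noncomputable def enatLog (n : ℕ∞) : ℝ≥0∞ :=
  if n = ⊤ then ⊤ else ENNReal.ofReal (Real.log n.toNat)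

/-- The naive `ε`-entropy `h_ε^nv(ρ) = inf_F log N_ε(X, ρ_F) / |F|`. -/
noncomputable def naiveEpsEntropy (Γ X : Type*) [Group Γ] [MulAction Γ X]
    (ρ : X → X → ℝ) (ε : ℝ) : ℝ≥0∞ :=
  ⨅ (F : Finset Γ) (_ : F.Nonempty),
    enatLog (sepNum X (dynMetric ρ F) ε) / (F.card : ℝ≥0∞)

/-- The naive topological entropy `h^nv = sup_{ε > 0} h_ε^nv(ρ)`. -/
noncomputable def naiveEntropy (Γ X : Type*) [Group Γ] [MulAction Γ X]
    (ρ : X → X → ℝ) : ℝ≥0∞ :=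
  ⨆ (ε : ℝ) (_ : 0 < ε), naiveEpsEntropy Γ X ρ ε

/-- The naive metric mean dimension of `Γ ↷ X` with respect to the metric `ρ`. -/
noncomputable def mdimMNaive (Γ X : Type*) [Group Γ] [MulAction Γ X]
    (ρ : X → X → ℝ) : ℝ≥0∞ :=
  Filter.liminf
    (fun ε : ℝ => naiveEpsEntropy Γ X ρ ε / ENNReal.ofReal (Real.log (1 / ε)))
    (nhdsWithin 0 (Set.Ioi 0))

/-- A sofic approximation of `Γ`. -/
structure SoficApprox (Γ : Type*) [Group Γ] where
  d : ℕ → ℕ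
  σ : ∀ i, Γ → Equiv.Perm (Fin (d i))
  approx_mul : ∀ s t : Γ, Filter.Tendsto
    (fun i => (({v | σ i s (σ i t v) = σ i (s * t) v} : Set (Fin (d i))).ncard : ℝ) / d i)
    atTop (nhds 1)
  approx_sep : ∀ s t : Γ, s ≠ t → Filter.Tendsto
    (fun i => (({v | σ i s v ≠ σ i t v} : Set (Fin (d i))).ncard : ℝ) / d i)
    atTop (nhds 1)
  d_top : Filter.Tendsto d atTop atTop

/-- The pseudometric `ρ_2` on maps `[d] → X`. -/
noncomputable def rho2 {X : Type*} (ρ : X → X → ℝ) {d : ℕ} (φ ψ : Fin d → X) : ℝ :=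
  Real.sqrt ((∑ v, ρ (φ v) (ψ v) ^ 2) / d)

/-- The pseudometric `ρ_∞` on maps `[d] → X`. -/
noncomputable def rhoInfty {X : Type*} (ρ : X → X → ℝ) {d : ℕ} (φ ψ : Fin d → X) : ℝ :=
  ⨆ v, ρ (φ v) (ψ v)

/-- The space `Map(ρ, F, δ, σ)` of approximately equivariant maps `[d] → X`. -/
def soficMap (Γ X : Type*) [SMul Γ X] (ρ : X → X → ℝ) (F : Finset Γ) (δ : ℝ)
    {d : ℕ} (σ : Γ → Equiv.Perm (Fin d)) : Set (Fin d → X) :=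
  {φ | ∀ s ∈ F, rho2 ρ (fun v => s • φ v) (fun v => φ (σ s v)) ≤ δ}

open Classical in
/-- The sofic `ε`-entropy `h_Σ^ε(ρ)`, with the convention `-∞` when the model spaces
are eventually empty. -/
noncomputable def soficEpsEntropy (Γ X : Type*) [Group Γ] [MulAction Γ X]
    (S : SoficApprox Γ) (ρ : X → X → ℝ) (ε : ℝ) : EReal :=
  ⨅ (F : Finset Γ) (_ : F.Nonempty) (δ : ℝ) (_ : 0 < δ),
    Filter.limsup (fun i =>
      if (soficMap Γ X ρ F δ (S.σ i)).Nonempty then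
        ((enatLog (sepNum (soficMap Γ X ρ F δ (S.σ i))
            (fun φ ψ => rhoInfty ρ (φ : Fin (S.d i) → X) (ψ : Fin (S.d i) → X)) ε) : ℝ≥0∞) :
              EReal) * (((S.d i : ℝ)⁻¹ : ℝ) : EReal)
      else (⊥ : EReal)) atTop

/-- The sofic metric mean dimension of `Γ ↷ X` with respect to the metric `ρ`. -/
noncomputable def mdimMSofic (Γ X : Type*) [Group Γ] [MulAction Γ X]
    (S : SoficApprox Γ) (ρ : X → X → ℝ) : EReal :=
  Filter.liminf
    (fun ε : ℝ => soficEpsEntropy Γ X S ρ ε * (((|Real.log ε|)⁻¹ : ℝ) : EReal))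
    (nhdsWithin 0 (Set.Ioi 0))


section LYaux

variable {Γ X : Type*} [Group Γ] [MulAction Γ X]

lemma LY_dyn_eq_sup' (ρ : X → X → ℝ) (hnn : ∀ x y, 0 ≤ ρ x y) (F : Finset Γ)
    (hF : F.Nonempty) (x y : X) :
    dynMetric ρ F x y = F.sup' hF (fun s => ρ (s • x) (s • y)) := by
  classical
  have hnn' : (0:ℝ) ≤ F.sup' hF (fun s => ρ (s • x) (s • y)) := by
    obtain ⟨s, hs⟩ := hF
    exact le_trans (hnn (s • x) (s • y)) (Finset.le_sup' (fun u => ρ (u • x) (u • y)) hs)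
  show (⨆ s ∈ F, ρ (s • x) (s • y)) = _
  apply le_antisymm
  · refine Real.iSup_le (fun s => ?_) hnn'
    by_cases hs : s ∈ F
    · haveI : Nonempty (s ∈ F) := ⟨hs⟩
      rw [ciSup_const]
      exact Finset.le_sup' (fun u => ρ (u • x) (u • y)) hs
    · haveI : IsEmpty (s ∈ F) := ⟨hs⟩
      rw [Real.iSup_of_isEmpty]
      exact hnn'
  · refine Finset.sup'_le hF _ (fun s hs => ?_)
    haveI : Nonempty (s ∈ F) := ⟨hs⟩
    have h1 : ρ (s • x) (s • y) = ⨆ (_ : s ∈ F), ρ (s • x) (s • y) := (ciSup_const).symm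
    rw [h1]
    apply le_ciSup (f := fun s => ⨆ (_ : s ∈ F), ρ (s • x) (s • y))
      (c := s)
    refine ⟨(F.sup' hF (fun s => ρ (s • x) (s • y))) ⊔ 0, ?_⟩
    rintro r ⟨u, rfl⟩
    show (⨆ (_ : u ∈ F), ρ (u • x) (u • y)) ≤ _
    by_cases hu : u ∈ F
    · haveI : Nonempty (u ∈ F) := ⟨hu⟩
      rw [ciSup_const]
      exact le_sup_of_le_left (Finset.le_sup' (fun u => ρ (u • x) (u • y)) hu)
    · haveI : IsEmpty (u ∈ F) := ⟨hu⟩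
      rw [Real.iSup_of_isEmpty]
      exact le_sup_right

lemma LY_le_dyn (ρ : X → X → ℝ) (hnn : ∀ x y, 0 ≤ ρ x y) {F : Finset Γ} {s : Γ}
    (hs : s ∈ F) (x y : X) : ρ (s • x) (s • y) ≤ dynMetric ρ F x y := by
  rw [LY_dyn_eq_sup' ρ hnn F ⟨s, hs⟩ x y]
  exact Finset.le_sup' (fun u => ρ (u • x) (u • y)) hs

lemma LY_dyn_le (ρ : X → X → ℝ) (hnn : ∀ x y, 0 ≤ ρ x y) {F : Finset Γ}
    (hF : F.Nonempty) {x y : X} {c : ℝ}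
    (h : ∀ s ∈ F, ρ (s • x) (s • y) ≤ c) : dynMetric ρ F x y ≤ c := by
  rw [LY_dyn_eq_sup' ρ hnn F hF x y]
  exact Finset.sup'_le hF _ h

lemma LY_dyn_nonneg (ρ : X → X → ℝ) (hnn : ∀ x y, 0 ≤ ρ x y) {F : Finset Γ}
    (hF : F.Nonempty) (x y : X) : 0 ≤ dynMetric ρ F x y := by
  obtain ⟨s, hs⟩ := hF
  exact le_trans (hnn (s • x) (s • y)) (LY_le_dyn ρ hnn hs x y)

lemma LY_dyn_self (ρ : X → X → ℝ) (hnn : ∀ x y, 0 ≤ ρ x y) (hself : ∀ x, ρ x x = 0)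
    {F : Finset Γ} (hF : F.Nonempty) (x : X) : dynMetric ρ F x x = 0 :=
  le_antisymm (LY_dyn_le ρ hnn hF (fun s _ => le_of_eq (hself (s • x))))
    (LY_dyn_nonneg ρ hnn hF x x)

lemma LY_dyn_symm (ρ : X → X → ℝ) (hnn : ∀ x y, 0 ≤ ρ x y)
    (hsym : ∀ x y, ρ x y = ρ y x) {F : Finset Γ} (hF : F.Nonempty) (x y : X) :
    dynMetric ρ F x y = dynMetric ρ F y x := by
  have key : ∀ a b : X, dynMetric ρ F a b ≤ dynMetric ρ F b a := by
    intro a b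
    refine LY_dyn_le ρ hnn hF (fun s hs => ?_)
    rw [hsym]
    exact LY_le_dyn ρ hnn hs b a
  exact le_antisymm (key x y) (key y x)

lemma LY_dyn_tri (ρ : X → X → ℝ) (hnn : ∀ x y, 0 ≤ ρ x y)
    (htri : ∀ x y z, ρ x z ≤ ρ x y + ρ y z) {F : Finset Γ} (hF : F.Nonempty)
    (x y z : X) : dynMetric ρ F x z ≤ dynMetric ρ F x y + dynMetric ρ F y z := by
  refine LY_dyn_le ρ hnn hF (fun s hs => ?_)
  exact le_trans (htri (s • x) (s • y) (s • z))
    (add_le_add (LY_le_dyn ρ hnn hs x y) (LY_le_dyn ρ hnn hs y z))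

lemma LY_dyn_one (ρ : X → X → ℝ) (hnn : ∀ x y, 0 ≤ ρ x y) :
    dynMetric ρ ({1} : Finset Γ) = ρ := by
  funext x y
  rw [LY_dyn_eq_sup' ρ hnn _ ⟨1, Finset.mem_singleton_self 1⟩ x y,
    Finset.sup'_singleton]
  rw [one_smul, one_smul]

lemma LY_encard_le_of_inj {α β : Type*} (Z : Set α) (T : Finset β) (f : α → β)
    (hmem : ∀ z ∈ Z, f z ∈ T) (hinj : Set.InjOn f Z) : Z.encard ≤ (T.card : ℕ∞) := by
  calc Z.encard = (f '' Z).encard := (hinj.encard_image).symm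
    _ ≤ (↑T : Set β).encard := Set.encard_le_encard (by rintro _ ⟨z, hz, rfl⟩; exact hmem z hz)
    _ = (T.card : ℕ∞) := Set.encard_coe_eq_coe_finsetCard T

/-- pigeonhole: a separated set has cardinality at most that of a half-radius net -/
lemma LY_sep_card_le {Y : Type*} (ρ' : Y → Y → ℝ) (hsym' : ∀ x y, ρ' x y = ρ' y x)
    (htri' : ∀ x y z, ρ' x z ≤ ρ' x y + ρ' y z) (r : ℝ)
    (D : Finset Y) (hD : ∀ x, ∃ p ∈ D, ρ' x p < r / 2) (Z : Set Y)
    (hZ : ∀ z ∈ Z, ∀ z' ∈ Z, z ≠ z' → r ≤ ρ' z z') : Z.encard ≤ (D.card : ℕ∞) := by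
  classical
  choose f hf1 hf2 using hD
  refine LY_encard_le_of_inj Z D f (fun z _ => hf1 z) ?_
  intro z hz z' hz' hfe
  by_contra hne
  have h1 := hZ z hz z' hz' hne
  have h2 : ρ' z z' ≤ ρ' z (f z) + ρ' (f z) z' := htri' z (f z) z'
  have h4 : ρ' (f z) z' = ρ' z' (f z') := by rw [hfe, hsym']
  linarith [hf2 z, hf2 z']

lemma LY_sepNum_le {Y : Type*} (ρ' : Y → Y → ℝ) (hsym' : ∀ x y, ρ' x y = ρ' y x)
    (htri' : ∀ x y z, ρ' x z ≤ ρ' x y + ρ' y z) (r : ℝ)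
    (D : Finset Y) (hD : ∀ x, ∃ p ∈ D, ρ' x p < r / 2) :
    sepNum Y ρ' r ≤ (D.card : ℕ∞) :=
  iSup₂_le fun Z hZ => LY_sep_card_le ρ' hsym' htri' r D hD Z hZ

end LYaux
section LYaux2

variable {Γ X : Type*} [Group Γ] [MulAction Γ X] [TopologicalSpace X] [CompactSpace X]

lemma LY_exists_net0 (ρ : X → X → ℝ) (hnn : ∀ x y, 0 ≤ ρ x y) (hself : ∀ x, ρ x x = 0)
    (hopen : ∀ (q : X) (r : ℝ), IsOpen {z : X | ρ z q < r})
    (hconts : ∀ s : Γ, Continuous (fun y : X => s • y))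
    (F : Finset Γ) (hF : F.Nonempty) (r : ℝ) (hr : 0 < r) :
    ∃ D : Finset X, ∀ x, ∃ p ∈ D, dynMetric ρ F x p < r := by
  classical
  have hUopen : ∀ p : X, IsOpen {y : X | dynMetric ρ F y p < r} := by
    intro p
    have h1 : {y : X | dynMetric ρ F y p < r}
        = ⋂ s ∈ F, (fun y : X => s • y) ⁻¹' {z | ρ z (s • p) < r} := by
      ext y
      simp only [Set.mem_setOf_eq, Set.mem_iInter, Set.mem_preimage]
      rw [LY_dyn_eq_sup' ρ hnn F hF]
      exact Finset.sup'_lt_iff hF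
    rw [h1]
    exact isOpen_biInter_finset fun s _ => (hopen _ _).preimage (hconts s)
  have hcover : (Set.univ : Set X) ⊆ ⋃ p : X, {y | dynMetric ρ F y p < r} := by
    intro x _
    refine Set.mem_iUnion.2 ⟨x, ?_⟩
    show dynMetric ρ F x x < r
    rw [LY_dyn_self ρ hnn hself hF x]
    exact hr
  obtain ⟨D, hD⟩ := isCompact_univ.elim_finite_subcover _ hUopen hcover
  refine ⟨D, fun x => ?_⟩
  have := hD (Set.mem_univ x)
  simpa using this

lemma LY_exists_good_net [Nonempty X] (ρ : X → X → ℝ) (hnn : ∀ x y, 0 ≤ ρ x y)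
    (hsym : ∀ x y, ρ x y = ρ y x) (htri : ∀ x y z, ρ x z ≤ ρ x y + ρ y z)
    (hself : ∀ x, ρ x x = 0)
    (hopen : ∀ (q : X) (r : ℝ), IsOpen {z : X | ρ z q < r})
    (hconts : ∀ s : Γ, Continuous (fun y : X => s • y))
    (F : Finset Γ) (hF : F.Nonempty) (r : ℝ) (hr : 0 < r) :
    ∃ D : Finset X, D.Nonempty ∧ (∀ x, ∃ p ∈ D, dynMetric ρ F x p < r) ∧
      ((D.card : ℕ∞) ≤ sepNum X (dynMetric ρ F) r) ∧ sepNum X (dynMetric ρ F) r < ⊤ := by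
  classical
  obtain ⟨D₀, hD₀⟩ := LY_exists_net0 ρ hnn hself hopen hconts F hF (r/2) (by linarith)
  set ρ' := dynMetric ρ F with hρ'
  have hsym' : ∀ x y, ρ' x y = ρ' y x := fun x y => LY_dyn_symm ρ hnn hsym hF x y
  have htri' : ∀ x y z, ρ' x z ≤ ρ' x y + ρ' y z := fun x y z => LY_dyn_tri ρ hnn htri hF x y z
  have hself' : ∀ x, ρ' x x = 0 := fun x => LY_dyn_self ρ hnn hself hF x
  have hD₀' : ∀ x, ∃ p ∈ D₀, ρ' x p < r/2 := hD₀
  have hsepfin : sepNum X ρ' r ≤ (D₀.card : ℕ∞) := LY_sepNum_le ρ' hsym' htri' r D₀ hD₀'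
  -- bound on separated finsets
  have hbound : ∀ Z : Finset X, (∀ z ∈ Z, ∀ z' ∈ Z, z ≠ z' → r ≤ ρ' z z') → Z.card ≤ D₀.card := by
    intro Z hZ
    have h1 : (↑Z : Set X).encard ≤ (D₀.card : ℕ∞) :=
      LY_sep_card_le ρ' hsym' htri' r D₀ hD₀' ↑Z (by intro z hz z' hz' hne; exact hZ z hz z' hz' hne)
    rw [Set.encard_coe_eq_coe_finsetCard] at h1
    exact_mod_cast h1
  -- maximal separated finset
  set P : ℕ → Prop := fun n => ∃ Z : Finset X,
    (∀ z ∈ Z, ∀ z' ∈ Z, z ≠ z' → r ≤ ρ' z z') ∧ Z.card = n with hP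
  obtain ⟨x₀⟩ := ‹Nonempty X›
  have hsing : ∀ z ∈ ({x₀} : Finset X), ∀ z' ∈ ({x₀} : Finset X), z ≠ z' → r ≤ ρ' z z' := by
    intro z hz z' hz' hne
    rw [Finset.mem_singleton] at hz hz'
    exact absurd (hz.trans hz'.symm) hne
  have hP1 : P 1 := ⟨{x₀}, hsing, Finset.card_singleton x₀⟩
  have h1N : 1 ≤ D₀.card := by
    have := hbound {x₀} hsing
    simpa using this
  set Sn := (Finset.range (D₀.card + 1)).filter P with hSn
  have h1mem : 1 ∈ Sn := by
    rw [hSn, Finset.mem_filter, Finset.mem_range]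
    exact ⟨by omega, hP1⟩
  have hSne : Sn.Nonempty := ⟨1, h1mem⟩
  set k := Sn.max' hSne with hk
  have hPk : P k := (Finset.mem_filter.1 (Sn.max'_mem hSne)).2
  obtain ⟨Z, hZsep, hZcard⟩ := hPk
  have hmax : ∀ n : ℕ, P n → n ≤ k := by
    intro n hn
    obtain ⟨Z', hZ'sep, hZ'card⟩ := hn
    apply Finset.le_max'
    rw [hSn, Finset.mem_filter, Finset.mem_range]
    have := hbound Z' hZ'sep
    exact ⟨by omega, ⟨Z', hZ'sep, hZ'card⟩⟩
  refine ⟨Z, ?_, ?_, ?_, lt_of_le_of_lt hsepfin (by exact_mod_cast WithTop.coe_lt_top _)⟩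
  · rw [← Finset.card_pos, hZcard]
    exact le_trans (by omega) (hmax 1 hP1)
  · intro x
    by_contra hx
    push_neg at hx
    have hxZ : x ∉ Z := by
      intro hxZ
      have := hx x hxZ
      rw [hself' x] at this
      linarith
    have hP' : P (k + 1) := by
      refine ⟨insert x Z, ?_, by rw [Finset.card_insert_of_notMem hxZ, hZcard]⟩
      intro z hz z' hz' hne
      rw [Finset.mem_insert] at hz hz'
      rcases hz with rfl | hz
      · rcases hz' with rfl | hz'
        · exact absurd rfl hne
        · exact hx z' hz'
      · rcases hz' with rfl | hz'
        · rw [hsym']; exact hx z hz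
        · exact hZsep z hz z' hz' hne
    have := hmax (k+1) hP'
    omega
  · -- card ≤ sepNum
    have h2 : (↑Z : Set X).encard ≤ sepNum X ρ' r := by
      refine le_iSup₂ (f := fun (Z' : Set X)
        (_ : ∀ z ∈ Z', ∀ z' ∈ Z', z ≠ z' → r ≤ ρ' z z') => Z'.encard) (↑Z : Set X) ?_
      intro z hz z' hz' hne
      exact hZsep z hz z' hz' hne
    rwa [Set.encard_coe_eq_coe_finsetCard] at h2

end LYaux2

section LYaux3

/-- greedy covering lemma -/
lemma LY_greedy {d : ℕ} (hd : 0 < d) (Cf : Fin d → Finset (Fin d)) (W : Finset (Fin d))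
    (m : ℕ) (hm : 0 < m) (hmd : m ≤ d)
    (hdeg : ∀ w ∈ W, m ≤ (Finset.univ.filter (fun v => w ∈ Cf v)).card) (K : ℕ) :
    ∃ V : Finset (Fin d), V.card ≤ K ∧
      ((W \ V.biUnion Cf).card : ℝ) ≤ d * (1 - (m:ℝ)/d) ^ K := by
  classical
  have hd' : (0:ℝ) < d := by exact_mod_cast hd
  have hfrac : 0 ≤ 1 - (m:ℝ)/d := by
    rw [sub_nonneg, div_le_one hd']
    exact_mod_cast hmd
  induction K with
  | zero =>
    refine ⟨∅, le_rfl, ?_⟩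
    rw [pow_zero, mul_one]
    calc ((W \ (∅ : Finset (Fin d)).biUnion Cf).card : ℝ)
        ≤ (Finset.univ : Finset (Fin d)).card := by
          exact_mod_cast Finset.card_le_card (Finset.subset_univ _)
      _ = d := by simp
  | succ K ih =>
    obtain ⟨V, hVc, hVu⟩ := ih
    set U := W \ V.biUnion Cf with hU
    rcases U.eq_empty_or_nonempty with hUe | hUne
    · refine ⟨V, hVc.trans (Nat.le_succ K), ?_⟩
      rw [← hU, hUe]
      simp only [Finset.card_empty, Nat.cast_zero]
      positivity
    · -- double counting
      have hsum : (m : ℝ) * U.card ≤ ∑ v : Fin d, ((Cf v ∩ U).card : ℝ) := by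
        have h1 : ∀ v : Fin d, (Cf v ∩ U).card = ∑ w ∈ U, if w ∈ Cf v then 1 else 0 := by
          intro v
          rw [Finset.inter_comm, ← Finset.filter_mem_eq_inter]
          exact Finset.card_filter _ _
        have h2 : ∑ v : Fin d, ((Cf v ∩ U).card : ℕ) = ∑ w ∈ U, (Finset.univ.filter (fun v => w ∈ Cf v)).card := by
          simp only [h1]
          rw [Finset.sum_comm]
          congr 1
          funext w
          exact (Finset.card_filter _ _).symm
        have h3 : m * U.card ≤ ∑ w ∈ U, (Finset.univ.filter (fun v => w ∈ Cf v)).card := by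
          calc m * U.card = ∑ _w ∈ U, m := by rw [Finset.sum_const, smul_eq_mul, mul_comm]
            _ ≤ _ := Finset.sum_le_sum (fun w hw => hdeg w (Finset.mem_sdiff.1 (hU ▸ hw)).1)
        have : (m * U.card : ℕ) ≤ ∑ v : Fin d, ((Cf v ∩ U).card : ℕ) := by rw [h2]; exact h3
        exact_mod_cast this
      have hex : ∃ v₀ : Fin d, (m : ℝ) * U.card / d ≤ ((Cf v₀ ∩ U).card : ℝ) := by
        by_contra hall
        push_neg at hall
        have : ∑ v : Fin d, ((Cf v ∩ U).card : ℝ) < ∑ _v : Fin d, (m : ℝ) * U.card / d := by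
          apply Finset.sum_lt_sum_of_nonempty
          · exact Finset.univ_nonempty_iff.2 ⟨⟨0, hd⟩⟩
          · exact fun v _ => hall v
        rw [Finset.sum_const, Finset.card_univ, Fintype.card_fin, nsmul_eq_mul,
          mul_div_cancel₀ _ (ne_of_gt hd')] at this
        linarith
      obtain ⟨v₀, hv₀⟩ := hex
      refine ⟨insert v₀ V, (Finset.card_insert_le _ _).trans (by omega), ?_⟩
      have hsub : W \ (insert v₀ V).biUnion Cf = U \ Cf v₀ := by
        rw [Finset.biUnion_insert, hU]
        ext w
        simp only [Finset.mem_sdiff, Finset.mem_union]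
        tauto
      rw [hsub]
      have h1 : ((U \ Cf v₀).card : ℝ) = U.card - (U ∩ Cf v₀).card := by
        have := Finset.card_inter_add_card_sdiff U (Cf v₀)
        have h2 : (U ∩ Cf v₀).card + (U \ Cf v₀).card = U.card := this
        push_cast [← h2]
        ring
      rw [h1, Finset.inter_comm]
      calc (U.card : ℝ) - (Cf v₀ ∩ U).card ≤ U.card - (m : ℝ) * U.card / d := by linarith
        _ = (U.card : ℝ) * (1 - (m:ℝ)/d) := by field_simp
        _ ≤ (d * (1 - (m:ℝ)/d) ^ K) * (1 - (m:ℝ)/d) := by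
            apply mul_le_mul_of_nonneg_right _ hfrac
            exact hVu
        _ = d * (1 - (m:ℝ)/d) ^ (K + 1) := by ring

/-- counting subsets with weights: Chernoff-style bound -/
lemma LY_chernoff (d k M₀ : ℕ) (hM₀ : 1 ≤ M₀) (κ : ℝ) (hκ0 : 0 < κ) (hκ1 : κ ≤ 1)
    (hk : (k:ℝ) ≤ κ * d) :
    ((∑ B ∈ Finset.univ.filter (fun B : Finset (Fin d) => B.card ≤ k), M₀ ^ B.card : ℕ) : ℝ)
      ≤ ((M₀:ℝ)/κ) ^ k * Real.exp (κ * d) := by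
  classical
  have hM₀' : (1:ℝ) ≤ (M₀ : ℝ) := by exact_mod_cast hM₀
  have hMκ : (1:ℝ) ≤ (M₀:ℝ)/κ := by
    rw [le_div_iff₀ hκ0]
    linarith
  have step1 : ((∑ B ∈ Finset.univ.filter (fun B : Finset (Fin d) => B.card ≤ k), M₀ ^ B.card : ℕ) : ℝ)
      ≤ ((M₀:ℝ)/κ) ^ k * ∑ B ∈ (Finset.univ : Finset (Finset (Fin d))), κ ^ B.card := by
    push_cast
    rw [Finset.mul_sum]
    calc ∑ B ∈ Finset.univ.filter (fun B : Finset (Fin d) => B.card ≤ k), ((M₀:ℝ)) ^ B.card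
        ≤ ∑ B ∈ Finset.univ.filter (fun B : Finset (Fin d) => B.card ≤ k),
            ((M₀:ℝ)/κ) ^ k * κ ^ B.card := by
          apply Finset.sum_le_sum
          intro B hB
          have hBk : B.card ≤ k := (Finset.mem_filter.1 hB).2
          have h1 : ((M₀:ℝ)) ^ B.card = ((M₀:ℝ)/κ) ^ B.card * κ ^ B.card := by
            rw [← mul_pow, div_mul_cancel₀ _ (ne_of_gt hκ0)]
          rw [h1]
          apply mul_le_mul_of_nonneg_right _ (by positivity)
          exact pow_le_pow_right₀ hMκ hBk
      _ ≤ _ := by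
          apply Finset.sum_le_sum_of_subset_of_nonneg (Finset.filter_subset _ _)
          intro B _ _
          positivity
  have step2 : ∑ B ∈ (Finset.univ : Finset (Finset (Fin d))), κ ^ B.card = (κ + 1) ^ d := by
    have := Finset.prod_add (fun _ : Fin d => κ) (fun _ : Fin d => (1:ℝ)) Finset.univ
    simp only [Finset.prod_const, Finset.prod_const_one, mul_one, Finset.card_univ,
      Fintype.card_fin, Finset.powerset_univ] at this
    rw [this]
    simp
  have step3 : (κ + 1) ^ d ≤ Real.exp (κ * d) := by
    calc (κ + 1) ^ d ≤ (Real.exp κ) ^ d := by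
          apply pow_le_pow_left₀ (by linarith) (Real.add_one_le_exp κ)
      _ = Real.exp (κ * d) := by rw [← Real.exp_nat_mul, mul_comm]
  calc ((∑ B ∈ Finset.univ.filter (fun B : Finset (Fin d) => B.card ≤ k), M₀ ^ B.card : ℕ) : ℝ)
      ≤ ((M₀:ℝ)/κ) ^ k * ∑ B ∈ (Finset.univ : Finset (Finset (Fin d))), κ ^ B.card := step1
    _ = ((M₀:ℝ)/κ) ^ k * (κ + 1) ^ d := by rw [step2]
    _ ≤ ((M₀:ℝ)/κ) ^ k * Real.exp (κ * d) := by
        apply mul_le_mul_of_nonneg_left step3 (by positivity)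

lemma LY_log_nat_nonneg (n : ℕ) : 0 ≤ Real.log n := by
  rcases Nat.eq_zero_or_pos n with h | h
  · simp [h]
  · exact Real.log_nonneg (by exact_mod_cast h)

lemma LY_enatLog_natCast (n : ℕ) : enatLog (n : ℕ∞) = ENNReal.ofReal (Real.log n) := by
  rw [enatLog, if_neg (by simp : (n:ℕ∞) ≠ ⊤)]
  simp

lemma LY_enatLog_ne_top {a : ℕ∞} (h : a ≠ ⊤) : enatLog a ≠ ⊤ := by
  simp [enatLog, h]

lemma LY_enatLog_mono {a b : ℕ∞} (h : a ≤ b) : enatLog a ≤ enatLog b := by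
  by_cases hb : b = ⊤
  · subst hb; simp [enatLog]
  have ha : a ≠ ⊤ := fun h' => hb (top_le_iff.mp (h' ▸ h))
  rw [enatLog, enatLog, if_neg ha, if_neg hb]
  apply ENNReal.ofReal_le_ofReal
  have h2 := ENat.toNat_le_toNat h hb
  rcases Nat.eq_zero_or_pos a.toNat with h0 | hpos
  · rw [h0]
    simpa using LY_log_nat_nonneg b.toNat
  · exact Real.log_le_log (by exact_mod_cast hpos) (by exact_mod_cast h2)

lemma LY_perm_card_eq {d : ℕ} (a b : Equiv.Perm (Fin d)) :
    (Finset.univ.filter fun w => a⁻¹ w = b⁻¹ w).card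
      = (Finset.univ.filter fun v => a v = b v).card := by
  classical
  apply Finset.card_bij (fun w _ => a⁻¹ w)
  · intro w hw
    rw [Finset.mem_filter] at hw ⊢
    refine ⟨Finset.mem_univ _, ?_⟩
    simp only [Equiv.Perm.coe_inv] at hw ⊢
    rw [Equiv.apply_symm_apply, hw.2, Equiv.apply_symm_apply]
  · intro w₁ _ w₂ _ h
    exact (Equiv.injective _) h
  · intro v hv
    rw [Finset.mem_filter] at hv
    refine ⟨a v, ?_, ?_⟩
    · rw [Finset.mem_filter]
      refine ⟨Finset.mem_univ _, ?_⟩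
      simp only [Equiv.Perm.coe_inv]
      rw [Equiv.symm_apply_apply, hv.2, Equiv.symm_apply_apply]
    · exact Equiv.symm_apply_apply a v

lemma LY_sigma_apply {ι γ : Type*} {F : ι → Type*} {a b : ι} {f : F a → γ} {g : F b → γ}
    (h : (⟨a, f⟩ : Σ i, F i → γ) = ⟨b, g⟩) {x : F a} {y : F b} (hxy : HEq x y) :
    f x = g y := by
  obtain ⟨h1, h2⟩ := Sigma.mk.inj_iff.mp h
  subst h1
  rw [eq_of_heq h2, eq_of_heq hxy]

end LYaux3
section LYcount

open Finset

lemma LY_count {Γ X : Type*} [Group Γ] [MulAction Γ X]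
    (ρ : X → X → ℝ)
    (hsym : ∀ x y, ρ x y = ρ y x) (htri : ∀ x y z, ρ x z ≤ ρ x y + ρ y z)
    (hnn : ∀ x y, 0 ≤ ρ x y)
    (E : Finset Γ) (hE : E.Nonempty) (ε : ℝ) (hε : 0 < ε)
    (DE D0 : Finset X)
    (hDEnet : ∀ x, ∃ p ∈ DE, dynMetric ρ E x p < ε/4)
    (hD0net : ∀ x, ∃ p ∈ D0, ρ x p < ε/4)
    (κ δ : ℝ) (hκ0 : 0 < κ) (hκ1 : κ ≤ 1)
    (hδ2 : (E.card : ℝ) * 64 * δ^2 ≤ κ/4 * ε^2)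
    (d : ℕ) (hd : 0 < d) (hmd : E.card ≤ d)
    (σ : Γ → Equiv.Perm (Fin d))
    (hσ : ∀ s ∈ E, ∀ s' ∈ E, s ≠ s' →
      ((Finset.univ.filter fun w : Fin d => (σ s)⁻¹ w = (σ s')⁻¹ w).card : ℝ)
        ≤ κ / (4 * (E.card:ℝ)^2) * d)
    (K k : ℕ) (hK : K = ⌈((d:ℝ) / (E.card:ℝ)) * Real.log (4/κ)⌉₊) (hk : k = ⌊κ * d⌋₊)
    (Z : Set (Fin d → X)) (hZmap : Z ⊆ soficMap Γ X ρ E δ σ)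
    (hZsep : ∀ f ∈ Z, ∀ g ∈ Z, f ≠ g → ε ≤ rhoInfty ρ f g) :
    Z.encard ≤ ((DE.card ^ K *
      ∑ B ∈ Finset.univ.filter (fun B : Finset (Fin d) => B.card ≤ k),
        D0.card ^ B.card : ℕ) : ℕ∞) := by
  classical
  rcases Z.eq_empty_or_nonempty with rfl | ⟨φ₁, hφ₁⟩
  · simp
  haveI hXne : Nonempty X := ⟨φ₁ ⟨0, hd⟩⟩
  choose nE hnE hnEd using hDEnet
  choose n0 hn0 hn0d using hD0net
  set m := E.card with hmdef
  have hm0 : 0 < m := Finset.card_pos.2 hE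
  have hm0' : (0:ℝ) < m := by exact_mod_cast hm0
  have hd' : (0:ℝ) < d := by exact_mod_cast hd
  -- covering structure
  set Cf : Fin d → Finset (Fin d) := fun v => E.image (fun s => σ s v) with hCf
  set W : Finset (Fin d) := Finset.univ.filter
    (fun w => ∀ s ∈ E, ∀ s' ∈ E, s ≠ s' → (σ s)⁻¹ w ≠ (σ s')⁻¹ w) with hW
  have hdeg : ∀ w ∈ W, m ≤ (Finset.univ.filter (fun v => w ∈ Cf v)).card := by
    intro w hw
    rw [hW, Finset.mem_filter] at hw
    have hinj : Set.InjOn (fun s => (σ s)⁻¹ w) ↑E := by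
      intro s hs s' hs' hss
      by_contra hne
      exact hw.2 s hs s' hs' hne hss
    calc m = (E.image (fun s => (σ s)⁻¹ w)).card := (Finset.card_image_of_injOn hinj).symm
      _ ≤ _ := by
          apply Finset.card_le_card
          intro v hv
          rw [Finset.mem_image] at hv
          obtain ⟨s, hs, rfl⟩ := hv
          rw [Finset.mem_filter]
          refine ⟨Finset.mem_univ _, ?_⟩
          rw [hCf]
          rw [Finset.mem_image]
          exact ⟨s, hs, Equiv.apply_symm_apply _ _⟩
  have hWc : ((Finset.univ \ W).card : ℝ) ≤ κ/4 * d := by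
    have hsub : Finset.univ \ W ⊆ E.offDiag.biUnion
        (fun p => Finset.univ.filter (fun w => (σ p.1)⁻¹ w = (σ p.2)⁻¹ w)) := by
      intro w hw
      rw [Finset.mem_sdiff, hW, Finset.mem_filter] at hw
      have hw2 : ¬ (∀ s ∈ E, ∀ s' ∈ E, s ≠ s' → (σ s)⁻¹ w ≠ (σ s')⁻¹ w) := by tauto
      push_neg at hw2
      obtain ⟨s, hs, s', hs', hne, heq⟩ := hw2
      rw [Finset.mem_biUnion]
      exact ⟨(s, s'), Finset.mem_offDiag.2 ⟨hs, hs', hne⟩,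
        Finset.mem_filter.2 ⟨Finset.mem_univ _, heq⟩⟩
    calc ((Finset.univ \ W).card : ℝ)
        ≤ ((E.offDiag.biUnion (fun p => Finset.univ.filter
            (fun w => (σ p.1)⁻¹ w = (σ p.2)⁻¹ w))).card : ℝ) := by
          exact_mod_cast Finset.card_le_card hsub
      _ ≤ ∑ p ∈ E.offDiag, ((Finset.univ.filter
            (fun w => (σ p.1)⁻¹ w = (σ p.2)⁻¹ w)).card : ℝ) := by
          exact_mod_cast Finset.card_biUnion_le
      _ ≤ ∑ _p ∈ E.offDiag, κ / (4 * (m:ℝ)^2) * d := by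
          apply Finset.sum_le_sum
          intro p hp
          rw [Finset.mem_offDiag] at hp
          exact hσ p.1 hp.1 p.2 hp.2.1 hp.2.2
      _ = (E.offDiag.card : ℝ) * (κ / (4 * (m:ℝ)^2) * d) := by
          rw [Finset.sum_const, nsmul_eq_mul]
      _ ≤ ((m:ℝ) * m) * (κ / (4 * (m:ℝ)^2) * d) := by
          apply mul_le_mul_of_nonneg_right _ (by positivity)
          rw [Finset.offDiag_card, ← hmdef]
          push_cast [Nat.cast_sub (Nat.le_mul_of_pos_left m hm0)]
          nlinarith [hm0']
      _ = κ/4 * d := by field_simp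
  -- greedy covering
  obtain ⟨V, hVK, hVu⟩ := LY_greedy hd Cf W m hm0 hmd hdeg K
  have hVu' : ((W \ V.biUnion Cf).card : ℝ) ≤ κ/4 * d := by
    refine hVu.trans ?_
    have hlog4κ : 0 ≤ Real.log (4/κ) := Real.log_nonneg (by rw [le_div_iff₀ hκ0]; linarith)
    have h1 : (1 - (m:ℝ)/d) ^ K ≤ Real.exp (-((m:ℝ)/d)) ^ K := by
      apply pow_le_pow_left₀
      · rw [sub_nonneg, div_le_one hd']; exact_mod_cast hmd
      · linarith [Real.add_one_le_exp (-((m:ℝ)/d))]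
    have h2 : Real.exp (-((m:ℝ)/d)) ^ K = Real.exp ((K:ℝ) * (-((m:ℝ)/d))) := by
      rw [Real.exp_nat_mul]
    have h3 : Real.exp ((K:ℝ) * (-((m:ℝ)/d))) ≤ Real.exp (- Real.log (4/κ)) := by
      apply Real.exp_le_exp.2
      have hKge : ((d:ℝ)/m) * Real.log (4/κ) ≤ K := hK ▸ Nat.le_ceil _
      rw [mul_neg, neg_le_neg_iff]
      calc Real.log (4/κ) = ((m:ℝ)/d) * (((d:ℝ)/m) * Real.log (4/κ)) := by
            field_simp
        _ ≤ ((m:ℝ)/d) * K := by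
            apply mul_le_mul_of_nonneg_left hKge (by positivity)
        _ = (K:ℝ) * ((m:ℝ)/d) := by ring
    have h4 : Real.exp (- Real.log (4/κ)) = κ/4 := by
      rw [Real.exp_neg, Real.exp_log (by positivity), inv_div]
    calc (d:ℝ) * (1 - (m:ℝ)/d) ^ K ≤ (d:ℝ) * (κ/4) := by
          apply mul_le_mul_of_nonneg_left _ (by positivity)
          rw [← h4]
          exact h1.trans (h2 ▸ h3)
      _ = κ/4 * d := by ring
  set Cov : Finset (Fin d) := V.biUnion Cf with hCovdef
  -- witnesses
  have hwitex : ∀ w : Fin d, ∃ p : Γ × Fin d,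
      w ∈ Cov → (p.1 ∈ E ∧ p.2 ∈ V ∧ σ p.1 p.2 = w) := by
    intro w
    by_cases hw : w ∈ Cov
    · rw [hCovdef, Finset.mem_biUnion] at hw
      obtain ⟨v, hv, hvw⟩ := hw
      rw [hCf, Finset.mem_image] at hvw
      obtain ⟨s, hs, hsw⟩ := hvw
      exact ⟨(s, v), fun _ => ⟨hs, hv, hsw⟩⟩
    · exact ⟨(1, ⟨0, hd⟩), fun h => absurd h hw⟩
  choose wit hwit using hwitex
  -- bad sets
  set Bs : (Fin d → X) → Finset (Fin d) := fun φ => (Finset.univ \ Cov) ∪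
    (Cov.filter (fun w => ε/8 < ρ ((wit w).1 • φ ((wit w).2)) (φ w))) with hBs
  have hBk : ∀ φ ∈ Z, (Bs φ).card ≤ k := by
    intro φ hφ
    have hmap := hZmap hφ
    have hcheb : ∀ s ∈ E, ((Finset.univ.filter
        (fun v => ε/8 < ρ (s • φ v) (φ (σ s v)))).card : ℝ) ≤ 64 * δ^2 / ε^2 * d := by
      intro s hs
      have h2 := hmap s hs
      rw [rho2] at h2
      have hsnn : 0 ≤ (∑ v, ρ (s • φ v) (φ (σ s v)) ^ 2) / d := by positivity
      have hδnn : 0 ≤ δ := le_trans (Real.sqrt_nonneg _) h2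
      have hsum : (∑ v, ρ (s • φ v) (φ (σ s v)) ^ 2) ≤ δ^2 * d := by
        have h3 : (∑ v, ρ (s • φ v) (φ (σ s v)) ^ 2) / d ≤ δ^2 := by
          nlinarith [Real.sq_sqrt hsnn, Real.sqrt_nonneg
            ((∑ v, ρ (s • φ v) (φ (σ s v)) ^ 2) / d)]
        calc (∑ v, ρ (s • φ v) (φ (σ s v)) ^ 2)
            = ((∑ v, ρ (s • φ v) (φ (σ s v)) ^ 2) / d) * d := by field_simp
          _ ≤ δ^2 * d := by apply mul_le_mul_of_nonneg_right h3 (le_of_lt hd')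
      set T := Finset.univ.filter (fun v => ε/8 < ρ (s • φ v) (φ (σ s v))) with hT
      have hTsum : (T.card : ℝ) * (ε/8)^2 ≤ ∑ v, ρ (s • φ v) (φ (σ s v)) ^ 2 := by
        calc (T.card : ℝ) * (ε/8)^2 = ∑ _v ∈ T, (ε/8)^2 := by
              rw [Finset.sum_const, nsmul_eq_mul]
          _ ≤ ∑ v ∈ T, ρ (s • φ v) (φ (σ s v)) ^ 2 := by
              apply Finset.sum_le_sum
              intro v hv
              rw [hT, Finset.mem_filter] at hv
              have := hv.2
              nlinarith [hnn (s • φ v) (φ (σ s v))]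
          _ ≤ ∑ v, ρ (s • φ v) (φ (σ s v)) ^ 2 := by
              apply Finset.sum_le_sum_of_subset_of_nonneg (Finset.subset_univ T)
              intro v _ _
              positivity
      have hε8 : (0:ℝ) < (ε/8)^2 := by positivity
      rw [div_mul_eq_mul_div, le_div_iff₀ (by positivity : (0:ℝ) < ε^2)]
      have h9 := hTsum.trans hsum
      nlinarith [h9]
    -- assemble
    have hfar : (Cov.filter (fun w => ε/8 < ρ ((wit w).1 • φ ((wit w).2)) (φ w)))
        ⊆ E.biUnion (fun s => (Finset.univ.filter
            (fun v => ε/8 < ρ (s • φ v) (φ (σ s v)))).image (σ s)) := by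
      intro w hw
      rw [Finset.mem_filter] at hw
      obtain ⟨hwCov, hwfar⟩ := hw
      obtain ⟨hs, hv, hsv⟩ := hwit w hwCov
      rw [Finset.mem_biUnion]
      refine ⟨(wit w).1, hs, ?_⟩
      rw [Finset.mem_image]
      refine ⟨(wit w).2, ?_, hsv⟩
      rw [Finset.mem_filter]
      refine ⟨Finset.mem_univ _, ?_⟩
      rw [hsv]
      exact hwfar
    have hfarcard : ((Cov.filter (fun w => ε/8 < ρ ((wit w).1 • φ ((wit w).2)) (φ w))).card : ℝ)
        ≤ κ/4 * d := by
      calc ((Cov.filter (fun w => ε/8 < ρ ((wit w).1 • φ ((wit w).2)) (φ w))).card : ℝ)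
          ≤ ((E.biUnion (fun s => (Finset.univ.filter
              (fun v => ε/8 < ρ (s • φ v) (φ (σ s v)))).image (σ s))).card : ℝ) := by
            exact_mod_cast Finset.card_le_card hfar
        _ ≤ ∑ s ∈ E, (((Finset.univ.filter
              (fun v => ε/8 < ρ (s • φ v) (φ (σ s v)))).image (σ s)).card : ℝ) := by
            exact_mod_cast Finset.card_biUnion_le
        _ ≤ ∑ s ∈ E, (64 * δ^2 / ε^2 * d) := by
            apply Finset.sum_le_sum
            intro s hs
            calc (((Finset.univ.filter (fun v => ε/8 < ρ (s • φ v) (φ (σ s v)))).image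
                  (σ s)).card : ℝ)
                ≤ ((Finset.univ.filter (fun v => ε/8 < ρ (s • φ v) (φ (σ s v)))).card : ℝ) := by
                  exact_mod_cast Finset.card_image_le
              _ ≤ _ := hcheb s hs
        _ = (m:ℝ) * (64 * δ^2 / ε^2 * d) := by rw [Finset.sum_const, nsmul_eq_mul]
        _ ≤ κ/4 * d := by
            have hε2 : (0:ℝ) < ε^2 := by positivity
            have key : (m:ℝ) * (64 * δ^2 / ε^2 * d) = ((m:ℝ) * 64 * δ^2) * d / ε^2 := by
              ring
            rw [key, div_le_iff₀ hε2]
            nlinarith [hd'.le, hδ2]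
    have hBcard : ((Bs φ).card : ℝ) ≤ κ * d := by
      have hu1 : Finset.univ \ Cov ⊆ (Finset.univ \ W) ∪ (W \ Cov) := by
        intro w hw
        rw [Finset.mem_sdiff] at hw
        rw [Finset.mem_union, Finset.mem_sdiff, Finset.mem_sdiff]
        by_cases hwW : w ∈ W
        · exact Or.inr ⟨hwW, hw.2⟩
        · exact Or.inl ⟨hw.1, hwW⟩
      have h5 : ((Finset.univ \ Cov).card : ℝ) ≤ κ/4 * d + κ/4 * d := by
        calc ((Finset.univ \ Cov).card : ℝ)
            ≤ (((Finset.univ \ W) ∪ (W \ Cov)).card : ℝ) := by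
              exact_mod_cast Finset.card_le_card hu1
          _ ≤ ((Finset.univ \ W).card : ℝ) + ((W \ Cov).card : ℝ) := by
              exact_mod_cast Finset.card_union_le _ _
          _ ≤ κ/4 * d + κ/4 * d := add_le_add hWc hVu'
      calc ((Bs φ).card : ℝ)
          ≤ ((Finset.univ \ Cov).card : ℝ) + ((Cov.filter
              (fun w => ε/8 < ρ ((wit w).1 • φ ((wit w).2)) (φ w))).card : ℝ) := by
            rw [hBs]
            exact_mod_cast Finset.card_union_le _ _
        _ ≤ (κ/4 * d + κ/4 * d) + κ/4 * d := add_le_add h5 hfarcard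
        _ ≤ κ * d := by nlinarith [hd'.le, hκ0.le]
    rw [hk]
    exact Nat.le_floor hBcard
  -- the injection
  set Bsel : (Fin d → X) → {B : Finset (Fin d) // B.card ≤ k} := fun φ =>
    if h : (Bs φ).card ≤ k then ⟨Bs φ, h⟩ else ⟨∅, by simp⟩ with hBsel
  set Θ : (Fin d → X) → ((↥V → ↥DE) ×
      Σ B : {B : Finset (Fin d) // B.card ≤ k}, (↥(B.1) → ↥D0)) := fun φ =>
    (fun v => ⟨nE (φ v.1), hnE _⟩, ⟨Bsel φ, fun w => ⟨n0 (φ w.1), hn0 _⟩⟩) with hΘ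
  have hinj : Set.InjOn Θ Z := by
    intro φ hφ ψ hψ hfe
    by_contra hne
    have hsepa := hZsep φ hφ ψ hψ hne
    have hBφ : Bsel φ = ⟨Bs φ, hBk φ hφ⟩ := by rw [hBsel]; exact dif_pos (hBk φ hφ)
    have hBψ : Bsel ψ = ⟨Bs ψ, hBk ψ hψ⟩ := by rw [hBsel]; exact dif_pos (hBk ψ hψ)
    have hBeq : Bsel φ = Bsel ψ := congrArg (fun p => p.2.1) hfe
    have hBB : Bs φ = Bs ψ := by
      have := hBφ ▸ hBψ ▸ hBeq
      exact congrArg Subtype.val this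
    have h1 : ∀ v : Fin d, v ∈ V → nE (φ v) = nE (ψ v) := by
      intro v hv
      have h2 := congrFun (congrArg Prod.fst hfe) ⟨v, hv⟩
      exact congrArg Subtype.val h2
    have h2 : ∀ w : Fin d, w ∈ Bs φ → n0 (φ w) = n0 (ψ w) := by
      intro w hw
      have hsnd : (⟨Bsel φ, fun w => (⟨n0 (φ w.1), hn0 _⟩ : ↥D0)⟩
          : Σ B : {B : Finset (Fin d) // B.card ≤ k}, (↥(B.1) → ↥D0))
          = ⟨Bsel ψ, fun w => ⟨n0 (ψ w.1), hn0 _⟩⟩ := congrArg Prod.snd hfe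
      have hww : w ∈ (Bsel φ).1 := by rw [hBφ]; exact hw
      have hww' : w ∈ (Bsel ψ).1 := by rw [hBψ]; rw [hBB] at hw; exact hw
      have hxy : HEq (⟨w, hww⟩ : ↥((Bsel φ).1)) (⟨w, hww'⟩ : ↥((Bsel ψ).1)) := by
        have hmemiff : ∀ u : Fin d, u ∈ (Bsel φ).1 ↔ u ∈ (Bsel ψ).1 := by
          intro u; rw [hBeq]
        exact (Subtype.heq_iff_coe_eq hmemiff).2 rfl
      have := LY_sigma_apply (F := fun B : {B : Finset (Fin d) // B.card ≤ k} => ↥(B.1))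
        (γ := ↥D0) hsnd hxy
      exact congrArg Subtype.val this
    -- distance estimate
    have hdist : ∀ w : Fin d, ρ (φ w) (ψ w) ≤ 3*ε/4 := by
      intro w
      by_cases hw : w ∈ Bs φ
      · have e1 : ρ (φ w) (n0 (φ w)) < ε/4 := hn0d _
        have e2 : ρ (ψ w) (n0 (ψ w)) < ε/4 := hn0d _
        have e3 : n0 (φ w) = n0 (ψ w) := h2 w hw
        have e4 : ρ (n0 (φ w)) (ψ w) = ρ (ψ w) (n0 (ψ w)) := by
          rw [e3, hsym (n0 (ψ w)) (ψ w)]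
        calc ρ (φ w) (ψ w) ≤ ρ (φ w) (n0 (φ w)) + ρ (n0 (φ w)) (ψ w) := htri _ _ _
          _ ≤ 3*ε/4 := by linarith
      · have hwCov : w ∈ Cov := by
          by_contra hwc
          have hmem : w ∈ Bs φ := by
            rw [hBs]
            exact Finset.mem_union_left _ (Finset.mem_sdiff.2 ⟨Finset.mem_univ _, hwc⟩)
          exact hw hmem
        obtain ⟨hs, hv, hsv⟩ := hwit w hwCov
        set s := (wit w).1
        set u := (wit w).2
        have hnf : ¬ (ε/8 < ρ (s • φ u) (φ w)) := by
          intro hcon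
          have hmem : w ∈ Bs φ := by
            rw [hBs]
            exact Finset.mem_union_right _ (Finset.mem_filter.2 ⟨hwCov, hcon⟩)
          exact hw hmem
        have hnf' : ¬ (ε/8 < ρ (s • ψ u) (ψ w)) := by
          intro hcon
          rw [hBB] at hw
          have hmem : w ∈ Bs ψ := by
            rw [hBs]
            exact Finset.mem_union_right _ (Finset.mem_filter.2 ⟨hwCov, hcon⟩)
          exact hw hmem
        push_neg at hnf hnf'
        have hdyn : ρ (s • φ u) (s • ψ u) ≤ dynMetric ρ E (φ u) (ψ u) :=
          LY_le_dyn ρ hnn hs _ _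
        have hdynE : dynMetric ρ E (φ u) (ψ u) < ε/4 + ε/4 := by
          have d1 : dynMetric ρ E (φ u) (nE (φ u)) < ε/4 := hnEd _
          have d2 : dynMetric ρ E (ψ u) (nE (ψ u)) < ε/4 := hnEd _
          have d3 : nE (φ u) = nE (ψ u) := h1 u hv
          have d4 : dynMetric ρ E (nE (φ u)) (ψ u) = dynMetric ρ E (ψ u) (nE (ψ u)) := by
            rw [d3, LY_dyn_symm ρ hnn hsym hE (nE (ψ u)) (ψ u)]
          calc dynMetric ρ E (φ u) (ψ u)
              ≤ dynMetric ρ E (φ u) (nE (φ u)) + dynMetric ρ E (nE (φ u)) (ψ u) :=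
                LY_dyn_tri ρ hnn htri hE _ _ _
            _ < ε/4 + ε/4 := by linarith
        calc ρ (φ w) (ψ w) ≤ ρ (φ w) (s • φ u) + ρ (s • φ u) (ψ w) := htri _ _ _
          _ ≤ ρ (φ w) (s • φ u) + (ρ (s • φ u) (s • ψ u) + ρ (s • ψ u) (ψ w)) := by
              linarith [htri (s • φ u) (s • ψ u) (ψ w)]
          _ = ρ (s • φ u) (φ w) + (ρ (s • φ u) (s • ψ u) + ρ (s • ψ u) (ψ w)) := by
              rw [hsym]
          _ ≤ 3*ε/4 := by linarith
    have hlast : rhoInfty ρ φ ψ ≤ 3*ε/4 := by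
      rw [rhoInfty]
      exact Real.iSup_le (fun v => hdist v) (by positivity)
    linarith
  -- cardinality of the target
  have hDE1 : 1 ≤ DE.card := Finset.card_pos.2 ⟨nE (φ₁ ⟨0, hd⟩), hnE _⟩
  have htarget : ((Finset.univ : Finset ((↥V → ↥DE) ×
      Σ B : {B : Finset (Fin d) // B.card ≤ k}, (↥(B.1) → ↥D0))).card : ℕ∞)
      ≤ ((DE.card ^ K * ∑ B ∈ Finset.univ.filter
          (fun B : Finset (Fin d) => B.card ≤ k), D0.card ^ B.card : ℕ) : ℕ∞) := by
    rw [← Fintype.card, Fintype.card_prod, Fintype.card_sigma]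
    have hc1 : Fintype.card (↥V → ↥DE) = DE.card ^ V.card := by
      rw [Fintype.card_fun, Fintype.card_coe, Fintype.card_coe]
    have hc2 : ∑ B : {B : Finset (Fin d) // B.card ≤ k}, Fintype.card (↥(B.1) → ↥D0)
        = ∑ B ∈ Finset.univ.filter (fun B : Finset (Fin d) => B.card ≤ k),
            D0.card ^ B.card := by
      rw [← Finset.sum_subtype_eq_sum_filter
        (fun B : Finset (Fin d) => D0.card ^ B.card), Finset.subtype_univ]
      congr 1
      funext B
      rw [Fintype.card_fun, Fintype.card_coe, Fintype.card_coe]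
    rw [hc1, hc2]
    have : DE.card ^ V.card ≤ DE.card ^ K := Nat.pow_le_pow_right hDE1 hVK
    exact_mod_cast Nat.mul_le_mul_right _ this
  calc Z.encard ≤ ((Finset.univ : Finset ((↥V → ↥DE) ×
      Σ B : {B : Finset (Fin d) // B.card ≤ k}, (↥(B.1) → ↥D0))).card : ℕ∞) :=
        LY_encard_le_of_inj Z _ Θ (fun z _ => Finset.mem_univ _) hinj
    _ ≤ _ := htarget

end LYcount
section LYend

lemma LY_endgame (c γ Cγ η L h M κ nem m0r : ℝ)
    (hc : 0 < c)
    (hγdef : γ = min (1/2) (c/8))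
    (hCγdef : Cγ = Real.log 8 + Real.log (1/γ) + 3)
    (hηdef : η = min (1/2) (min (c/16) ((c/(8*Cγ))^2/2)))
    (hL : max 8 (8*Cγ/c) ≤ L)
    (hh0 : 0 ≤ h) (hM0 : 0 ≤ M) (hhM : h ≤ M)
    (hprod : h * M ≤ 2*η*L^2)
    (hκdef : κ = min (1/2) (γ/(M/L+1)))
    (hnem : nem ≤ h + κ) (hnem0 : 0 ≤ nem)
    (hm0r : m0r ≤ M) (hm0r0 : 0 ≤ m0r) :
    Real.log (4/κ) * nem + κ + κ*(m0r + Real.log (1/κ)) + κ ≤ c * L := by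
  have hγ0 : 0 < γ := by rw [hγdef]; exact lt_min (by norm_num) (by positivity)
  have hγh : γ ≤ 1/2 := by rw [hγdef]; exact min_le_left _ _
  have hγc : γ ≤ c/8 := by rw [hγdef]; exact min_le_right _ _
  have hlog8 : (0:ℝ) ≤ Real.log 8 := Real.log_nonneg (by norm_num)
  have hloginvγ : (0:ℝ) ≤ Real.log (1/γ) := by
    apply Real.log_nonneg
    rw [le_div_iff₀ hγ0]
    linarith
  have hCγ3 : 3 ≤ Cγ := by rw [hCγdef]; linarith
  have hCγ0 : 0 < Cγ := by linarith
  have hη0 : 0 < η := by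
    rw [hηdef]
    apply lt_min (by norm_num)
    apply lt_min (by positivity) (by positivity)
  have hη16 : η ≤ c/16 := by
    rw [hηdef]; exact (min_le_right _ _).trans (min_le_left _ _)
  have hηsq : η ≤ (c/(8*Cγ))^2/2 := by
    rw [hηdef]; exact (min_le_right _ _).trans (min_le_right _ _)
  have hL8 : 8 ≤ L := (le_max_left _ _).trans hL
  have hLpos : (0:ℝ) < L := by linarith
  have hLCγ : 2*Cγ ≤ c/4 * L := by
    have h1 : 8*Cγ/c ≤ L := (le_max_right _ _).trans hL
    rw [div_le_iff₀ hc] at h1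
    nlinarith
  set B := M / L with hBdef
  have hB0 : 0 ≤ B := by positivity
  have hMBL : M = B * L := by rw [hBdef]; field_simp
  have hB1 : (0:ℝ) < B + 1 := by linarith
  have hκ0 : 0 < κ := by rw [hκdef]; exact lt_min (by norm_num) (by positivity)
  have hκh : κ ≤ 1/2 := by rw [hκdef]; exact min_le_left _ _
  have hκB : κ * (B+1) ≤ γ := by
    have h1 : κ ≤ γ/(B+1) := by rw [hκdef]; exact min_le_right _ _
    rw [le_div_iff₀ hB1] at h1
    exact h1
  have hκB' : κ * (B+1) = κ*B + κ := by ring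
  have hκBnn : 0 ≤ κ * B := by positivity
  have hκBle : κ * B ≤ γ := by linarith
  have hκγ : κ ≤ γ := by linarith
  have hinvκ : 1/κ ≤ 2*(B+1)/γ := by
    rw [hκdef]
    rcases le_or_gt (γ/(B+1)) (1/2) with hcase | hcase
    · rw [min_eq_right hcase, one_div_div]
      rw [div_le_div_iff₀ hγ0 hγ0]
      nlinarith
    · rw [min_eq_left hcase.le]
      rw [div_le_div_iff₀ (by norm_num) hγ0]
      nlinarith
  have hlogκpos : 0 ≤ Real.log (1/κ) := by
    apply Real.log_nonneg
    rw [le_div_iff₀ hκ0]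
    linarith
  have hlogB1 : Real.log (B+1) ≤ B := by
    have := Real.log_le_sub_one_of_pos hB1
    linarith
  have hlogB1' : 0 ≤ Real.log (B+1) := Real.log_nonneg (by linarith)
  have hlogκ : Real.log (1/κ) ≤ Real.log 2 + Real.log (B+1) + Real.log (1/γ) := by
    calc Real.log (1/κ) ≤ Real.log (2*(B+1)/γ) := by
          apply Real.log_le_log (by positivity) hinvκ
      _ = Real.log 2 + Real.log (B+1) + Real.log (1/γ) := by
          rw [show 2*(B+1)/γ = 2 * (B+1) * (1/γ) by ring]
          rw [Real.log_mul (by positivity) (by positivity),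
            Real.log_mul (by positivity) (by positivity)]
  have hlog2 : Real.log 2 ≤ Real.log 8 := Real.log_le_log (by norm_num) (by norm_num)
  have hlog4 : Real.log 4 ≤ Real.log 8 := Real.log_le_log (by norm_num) (by norm_num)
  have hlog42 : Real.log 4 + Real.log 2 = Real.log 8 := by
    rw [← Real.log_mul (by norm_num) (by norm_num)]
    norm_num
  have hlog4κ : Real.log (4/κ) = Real.log 4 + Real.log (1/κ) := by
    rw [show (4:ℝ)/κ = 4 * (1/κ) by ring, Real.log_mul (by norm_num) (by positivity)]
  have hlog4κpos : 0 ≤ Real.log (4/κ) := by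
    rw [hlog4κ]; positivity
  have hlog4κle : Real.log (4/κ) ≤ Cγ + B := by
    rw [hlog4κ, hCγdef]
    have := hlogκ
    linarith
  -- sqrt bound on h
  have hA : h ≤ Real.sqrt (2*η) * L := by
    have h1 : h^2 ≤ 2*η*L^2 := by nlinarith
    have h2 := Real.sqrt_le_sqrt h1
    rw [Real.sqrt_sq hh0] at h2
    refine h2.trans ?_
    rw [show 2*η*L^2 = (2*η) * L^2 by ring, Real.sqrt_mul (by positivity) (L^2),
      Real.sqrt_sq hLpos.le]
  have hs : Real.sqrt (2*η) ≤ c/(8*Cγ) := by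
    have h1 : 2*η ≤ (c/(8*Cγ))^2 := by linarith
    have h2 := Real.sqrt_le_sqrt h1
    rwa [Real.sqrt_sq (by positivity)] at h2
  have hsnn : 0 ≤ Real.sqrt (2*η) := Real.sqrt_nonneg _
  -- main term bounds
  have hT1 : Real.log (4/κ) * h ≤ c/8 * L + 2*η*L := by
    calc Real.log (4/κ) * h ≤ (Cγ + B) * h := by
          apply mul_le_mul_of_nonneg_right hlog4κle hh0
      _ = Cγ * h + B * h := by ring
      _ ≤ Cγ * (Real.sqrt (2*η) * L) + 2*η*L := by
          have e1 : Cγ * h ≤ Cγ * (Real.sqrt (2*η) * L) :=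
            mul_le_mul_of_nonneg_left hA hCγ0.le
          have e2 : B * h ≤ 2*η*L := by
            have h3 : B * h * L ≤ (2*η*L) * L := by
              have e : B * h * L = h * M := by rw [hMBL]; ring
              rw [e]
              calc h * M ≤ 2*η*L^2 := hprod
                _ = (2*η*L)*L := by ring
            exact le_of_mul_le_mul_right h3 hLpos
          linarith
      _ ≤ c/8 * L + 2*η*L := by
          have e3 : Cγ * Real.sqrt (2*η) ≤ c/8 := by
            have := mul_le_mul_of_nonneg_left hs hCγ0.le
            calc Cγ * Real.sqrt (2*η) ≤ Cγ * (c/(8*Cγ)) := this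
              _ = c/8 := by field_simp
          have e4 : Cγ * (Real.sqrt (2*η) * L) ≤ c/8 * L := by
            have e5 := mul_le_mul_of_nonneg_right e3 hLpos.le
            calc Cγ * (Real.sqrt (2*η) * L) = (Cγ * Real.sqrt (2*η)) * L := by ring
              _ ≤ c/8 * L := e5
          linarith
  have hT2 : Real.log (4/κ) * κ ≤ Cγ := by
    calc Real.log (4/κ) * κ ≤ (Cγ + B) * κ := by
          apply mul_le_mul_of_nonneg_right hlog4κle hκ0.le
      _ = Cγ * κ + B * κ := by ring
      _ ≤ Cγ * (1/2) + γ := by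
          have e1 : Cγ * κ ≤ Cγ * (1/2) := mul_le_mul_of_nonneg_left hκh hCγ0.le
          have e2 : B * κ ≤ γ := by
            have e : B * κ = κ * B := by ring
            linarith
          linarith
      _ ≤ Cγ := by linarith
  have hT3 : κ * M ≤ γ * L := by
    rw [hMBL]
    have e5 := mul_le_mul_of_nonneg_right hκBle hLpos.le
    calc κ * (B * L) = (κ * B) * L := by ring
      _ ≤ γ * L := e5
  have hT4 : κ * Real.log (1/κ) ≤ (Real.log 2 + Real.log (1/γ))/2 + γ := by
    calc κ * Real.log (1/κ) ≤ κ * (Real.log 2 + Real.log (B+1) + Real.log (1/γ)) := by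
          apply mul_le_mul_of_nonneg_left hlogκ hκ0.le
      _ = κ * (Real.log 2 + Real.log (1/γ)) + κ * Real.log (B+1) := by ring
      _ ≤ (1/2) * (Real.log 2 + Real.log (1/γ)) + γ := by
          have e1 : κ * (Real.log 2 + Real.log (1/γ)) ≤ (1/2) * (Real.log 2 + Real.log (1/γ)) := by
            apply mul_le_mul_of_nonneg_right hκh (by linarith [hlog2, hlog8])
          have e2 : κ * Real.log (B+1) ≤ γ := by
            have e6 : κ * Real.log (B+1) ≤ κ * B := mul_le_mul_of_nonneg_left hlogB1 hκ0.le
            linarith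
          linarith
      _ = (Real.log 2 + Real.log (1/γ))/2 + γ := by ring
  -- assemble
  have hconst : Cγ + ((Real.log 2 + Real.log (1/γ))/2 + γ) + 1 ≤ 2*Cγ := by
    rw [hCγdef]
    have : Real.log 2 ≤ Real.log 8 := hlog2
    linarith
  have hmain : Real.log (4/κ) * nem + κ + κ*(m0r + Real.log (1/κ)) + κ
      ≤ (Real.log (4/κ) * h + Real.log (4/κ) * κ) + κ * M + κ * Real.log (1/κ) + 2*κ := by
    have e1 : Real.log (4/κ) * nem ≤ Real.log (4/κ) * (h + κ) :=
      mul_le_mul_of_nonneg_left hnem hlog4κpos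
    have e2 : κ * m0r ≤ κ * M := mul_le_mul_of_nonneg_left hm0r hκ0.le
    have e7 : Real.log (4/κ) * (h + κ) = Real.log (4/κ) * h + Real.log (4/κ) * κ := by ring
    have e8 : κ * (m0r + Real.log (1/κ)) = κ * m0r + κ * Real.log (1/κ) := by ring
    linarith
  have h2κ : 2*κ ≤ 1 := by linarith
  calc Real.log (4/κ) * nem + κ + κ*(m0r + Real.log (1/κ)) + κ
      ≤ (Real.log (4/κ) * h + Real.log (4/κ) * κ) + κ * M + κ * Real.log (1/κ) + 2*κ := hmain
    _ ≤ (c/8 * L + 2*η*L) + Cγ + γ * L + ((Real.log 2 + Real.log (1/γ))/2 + γ) + 1 := by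
        linarith [hT1, hT2, hT3, hT4]
    _ ≤ (c/8 * L + 2*η*L) + γ * L + 2*Cγ := by linarith [hconst]
    _ ≤ c/8 * L + c/8 * L + c/8 * L + c/4 * L := by
        have e1 : 2*η*L ≤ c/8 * L :=
          mul_le_mul_of_nonneg_right (by linarith) hLpos.le
        have e2 : γ * L ≤ c/8 * L :=
          mul_le_mul_of_nonneg_right (by linarith) hLpos.le
        linarith [hLCγ]
    _ ≤ c * L := by
        have e9 : c/8 * L + c/8 * L + c/8 * L + c/4 * L = (5/8*c) * L := by ring
        have e10 : (5/8*c) * L ≤ c * L :=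
          mul_le_mul_of_nonneg_right (by linarith) hLpos.le
        linarith
end LYend
section LYmain

open Filter

lemma LY_per_t {Γ X : Type*} [Group Γ] [MulAction Γ X] [TopologicalSpace X]
    [CompactSpace X] [Nonempty X]
    (S : SoficApprox Γ) (ρ : X → X → ℝ)
    (hsym : ∀ x y, ρ x y = ρ y x) (htri : ∀ x y z, ρ x z ≤ ρ x y + ρ y z)
    (hself : ∀ x, ρ x x = 0) (hnn : ∀ x y, 0 ≤ ρ x y)
    (hopen : ∀ (q : X) (r : ℝ), IsOpen {z : X | ρ z q < r})
    (hconts : ∀ s : Γ, Continuous (fun y : X => s • y))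
    (c γ Cγ η L₀ t₀ : ℝ) (hc : 0 < c)
    (hγdef : γ = min (1/2) (c/8))
    (hCγdef : Cγ = Real.log 8 + Real.log (1/γ) + 3)
    (hηdef : η = min (1/2) (min (c/16) ((c/(8*Cγ))^2/2)))
    (hL₀def : L₀ = max 8 (8*Cγ/c))
    (ht₀def : t₀ = Real.exp (-(L₀+3)))
    (t : ℝ) (ht0 : 0 < t) (htt₀ : t < t₀)
    (hprodE : (naiveEpsEntropy Γ X ρ t / ENNReal.ofReal |Real.log t|) *
        (enatLog (sepNum X ρ t) / ENNReal.ofReal |Real.log t|) < ENNReal.ofReal η) :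
    soficEpsEntropy Γ X S ρ (4*t) * (((|Real.log (4*t)|)⁻¹ : ℝ) : EReal) ≤ (c : EReal) := by
  classical
  have hγ0 : 0 < γ := by rw [hγdef]; exact lt_min (by norm_num) (by positivity)
  have hγh : γ ≤ 1/2 := by rw [hγdef]; exact min_le_left _ _
  have hlog8 : (0:ℝ) ≤ Real.log 8 := Real.log_nonneg (by norm_num)
  have hloginvγ : (0:ℝ) ≤ Real.log (1/γ) := by
    apply Real.log_nonneg
    rw [le_div_iff₀ hγ0]
    linarith
  have hCγ3 : 3 ≤ Cγ := by rw [hCγdef]; linarith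
  have hη0 : 0 < η := by
    rw [hηdef]
    apply lt_min (by norm_num)
    apply lt_min (by positivity) (by positivity)
  have hL₀8 : 8 ≤ L₀ := by rw [hL₀def]; exact le_max_left _ _
  -- logs
  have hε0 : 0 < 4*t := by linarith
  have hlogt : Real.log t < -(L₀+3) := by
    calc Real.log t < Real.log t₀ := Real.log_lt_log ht0 htt₀
      _ = -(L₀+3) := by rw [ht₀def, Real.log_exp]
  have hlog4 : Real.log 4 ≤ 3 := by
    have := Real.log_le_sub_one_of_pos (show (0:ℝ) < 4 by norm_num)
    linarith
  have hlog4' : 0 ≤ Real.log 4 := Real.log_nonneg (by norm_num)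
  have hlog4t : Real.log (4*t) = Real.log 4 + Real.log t :=
    Real.log_mul (by norm_num) (ne_of_gt ht0)
  have hlog4tneg : Real.log (4*t) < 0 := by rw [hlog4t]; linarith
  set L := |Real.log (4*t)| with hLdef
  have hLeq : L = -(Real.log 4 + Real.log t) := by
    rw [hLdef, abs_of_neg hlog4tneg, hlog4t]
  have hLL₀ : L₀ ≤ L := by rw [hLeq]; linarith
  have hL8 : 8 ≤ L := le_trans hL₀8 hLL₀
  have hLpos : 0 < L := by linarith
  set Lt := |Real.log t| with hLtdef
  have hlogtneg : Real.log t < 0 := by linarith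
  have hLteq : Lt = -Real.log t := by rw [hLtdef, abs_of_neg hlogtneg]
  have hLt3 : Lt ≤ L + 3 := by rw [hLteq, hLeq]; linarith
  have hLtL : L ≤ Lt := by rw [hLteq, hLeq]; linarith
  have hLtpos : 0 < Lt := by linarith
  -- nets for the plain metric
  have hdyn1 : dynMetric ρ ({1} : Finset Γ) = ρ := LY_dyn_one ρ hnn
  obtain ⟨D0, hD0ne, hD0net0, hD0card0, hsepfin0⟩ :=
    LY_exists_good_net ρ hnn hsym htri hself hopen hconts ({1} : Finset Γ)
      ⟨1, Finset.mem_singleton_self 1⟩ t ht0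
  rw [hdyn1] at hD0net0 hD0card0 hsepfin0
  -- naive entropy finiteness
  have hnaive_le : naiveEpsEntropy Γ X ρ t ≤ enatLog (sepNum X ρ t) := by
    have h1 : naiveEpsEntropy Γ X ρ t ≤
        enatLog (sepNum X (dynMetric ρ ({1} : Finset Γ)) t) / ((({1} : Finset Γ).card : ℝ≥0∞)) := by
      exact iInf₂_le ({1} : Finset Γ) ⟨1, Finset.mem_singleton_self 1⟩
    rw [hdyn1, Finset.card_singleton] at h1
    simpa using h1
  have hsepne : enatLog (sepNum X ρ t) ≠ ⊤ := LY_enatLog_ne_top hsepfin0.ne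
  have hnfin : naiveEpsEntropy Γ X ρ t ≠ ⊤ :=
    (lt_of_le_of_lt hnaive_le (lt_of_le_of_ne le_top hsepne)).ne
  set h : ℝ := (naiveEpsEntropy Γ X ρ t).toReal with hhdef
  set M : ℝ := (enatLog (sepNum X ρ t)).toReal with hMdef
  have hh0 : 0 ≤ h := ENNReal.toReal_nonneg
  have hM0 : 0 ≤ M := ENNReal.toReal_nonneg
  have hhM : h ≤ M := ENNReal.toReal_mono hsepne hnaive_le
  -- product bound
  have hprodR : h * M ≤ 2*η*L^2 := by
    have h1 : ((naiveEpsEntropy Γ X ρ t / ENNReal.ofReal Lt) *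
        (enatLog (sepNum X ρ t) / ENNReal.ofReal Lt)).toReal < η := by
      apply ENNReal.toReal_lt_of_lt_ofReal
      exact hprodE
    rw [ENNReal.toReal_mul, ENNReal.toReal_div, ENNReal.toReal_div,
      ENNReal.toReal_ofReal hLtpos.le] at h1
    have h2 : h * M ≤ η * Lt^2 := by
      have e : h/Lt*(M/Lt)*Lt^2 = h*M := by
        field_simp
      have h6 := mul_le_mul_of_nonneg_right h1.le (show (0:ℝ) ≤ Lt^2 by positivity)
      rwa [e] at h6
    have hLL : 8*L ≤ L*L := mul_le_mul_of_nonneg_right hL8 hLpos.le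
    have e1 : Lt^2 ≤ (L+3)^2 := pow_le_pow_left₀ hLtpos.le hLt3 2
    have h3 : Lt^2 ≤ 2*L^2 := by linarith [hLL, e1, hL8]
    have h4 : η * Lt^2 ≤ η * (2*L^2) := mul_le_mul_of_nonneg_left h3 hη0.le
    have h5 : η * (2*L^2) = 2*η*L^2 := by ring
    linarith
  -- κ
  set B : ℝ := M / L with hBdef
  have hB0 : 0 ≤ B := by positivity
  set κ : ℝ := min (1/2) (γ/(B+1)) with hκdef
  have hκ0 : 0 < κ := by
    apply lt_min (by norm_num)
    have : 0 < B + 1 := by linarith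
    positivity
  have hκh : κ ≤ 1/2 := min_le_left _ _
  have hκ1 : κ ≤ 1 := by linarith
  -- choose E
  have hEex : ∃ E : Finset Γ, E.Nonempty ∧
      enatLog (sepNum X (dynMetric ρ E) t) / (E.card : ℝ≥0∞)
        < naiveEpsEntropy Γ X ρ t + ENNReal.ofReal κ := by
    have hlt : naiveEpsEntropy Γ X ρ t < naiveEpsEntropy Γ X ρ t + ENNReal.ofReal κ :=
      ENNReal.lt_add_right hnfin (by simp [ENNReal.ofReal_eq_zero]; linarith)
    conv_lhs at hlt => rw [naiveEpsEntropy]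
    rw [iInf_lt_iff] at hlt
    obtain ⟨E, hE2⟩ := hlt
    rw [iInf_lt_iff] at hE2
    obtain ⟨hEne, hE3⟩ := hE2
    exact ⟨E, hEne, hE3⟩
  obtain ⟨E, hEne, hElt⟩ := hEex
  set m := E.card with hmdef
  have hm0 : 0 < m := Finset.card_pos.2 hEne
  have hm0' : (0:ℝ) < m := by exact_mod_cast hm0
  -- net for E
  obtain ⟨DE, hDEne, hDEnet, hDEcard, hEfin⟩ :=
    LY_exists_good_net ρ hnn hsym htri hself hopen hconts E hEne t ht0
  set NEr : ℝ := Real.log DE.card with hNEdef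
  have hNE1 : 1 ≤ DE.card := Finset.card_pos.2 hDEne
  have hNEr0 : 0 ≤ NEr := LY_log_nat_nonneg _
  have hNErle : NEr ≤ (h + κ) * m := by
    have h1 : enatLog ((DE.card : ℕ∞)) ≤ enatLog (sepNum X (dynMetric ρ E) t) :=
      LY_enatLog_mono hDEcard
    have h2 : enatLog (sepNum X (dynMetric ρ E) t)
        < (naiveEpsEntropy Γ X ρ t + ENNReal.ofReal κ) * (m : ℝ≥0∞) := by
      rw [ENNReal.div_lt_iff (Or.inl (by exact_mod_cast hm0.ne'))
        (Or.inl (by simp))] at hElt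
      exact hElt
    have h3 : enatLog ((DE.card : ℕ∞))
        < (naiveEpsEntropy Γ X ρ t + ENNReal.ofReal κ) * (m : ℝ≥0∞) := lt_of_le_of_lt h1 h2
    have h4 : (enatLog ((DE.card : ℕ∞))).toReal
        ≤ ((naiveEpsEntropy Γ X ρ t + ENNReal.ofReal κ) * (m : ℝ≥0∞)).toReal := by
      apply ENNReal.toReal_mono _ h3.le
      apply ENNReal.mul_ne_top
      · exact ENNReal.add_ne_top.2 ⟨hnfin, ENNReal.ofReal_ne_top⟩
      · simp
    rw [LY_enatLog_natCast, ENNReal.toReal_ofReal (LY_log_nat_nonneg _)] at h4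
    rw [ENNReal.toReal_mul, ENNReal.toReal_add hnfin ENNReal.ofReal_ne_top,
      ENNReal.toReal_ofReal hκ0.le, ENNReal.toReal_natCast] at h4
    exact h4
  set M0r : ℝ := Real.log D0.card with hM0def
  have hM01 : 1 ≤ D0.card := Finset.card_pos.2 hD0ne
  have hM0r0 : 0 ≤ M0r := LY_log_nat_nonneg _
  have hM0rle : M0r ≤ M := by
    have h1 : enatLog ((D0.card : ℕ∞)) ≤ enatLog (sepNum X ρ t) := LY_enatLog_mono hD0card0
    have h2 := ENNReal.toReal_mono hsepne h1
    rwa [LY_enatLog_natCast, ENNReal.toReal_ofReal (LY_log_nat_nonneg _)] at h2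
  -- δ
  set δ : ℝ := (4*t) * Real.sqrt κ / (16 * Real.sqrt m) with hδdef
  have hδ0 : 0 < δ := by
    rw [hδdef]
    have h1 : 0 < Real.sqrt κ := Real.sqrt_pos.2 hκ0
    have h2 : 0 < Real.sqrt m := Real.sqrt_pos.2 hm0'
    positivity
  have hδ2 : (m : ℝ) * 64 * δ^2 ≤ κ/4 * (4*t)^2 := by
    have hδsq : δ^2 = (4*t)^2 * κ / (256 * m) := by
      have h16 : (16*Real.sqrt m)^2 = 256 * (m:ℝ) := by
        rw [mul_pow, Real.sq_sqrt (by positivity : (0:ℝ) ≤ (m:ℝ))]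
        norm_num
      have hnum : ((4*t)*Real.sqrt κ)^2 = (4*t)^2 * κ := by
        rw [mul_pow, Real.sq_sqrt hκ0.le]
      rw [hδdef, div_pow, h16, hnum]
    have heq : (m : ℝ) * 64 * ((4*t)^2 * κ / (256 * m)) = κ/4 * (4*t)^2 := by
      field_simp
      ring
    rw [hδsq, heq]
  -- Creal
  set Creal : ℝ := Real.log (4/κ) * (NEr/m) + κ + κ*(M0r + Real.log (1/κ)) + κ with hCrealdef
  have hlog4κ0 : 0 ≤ Real.log (4/κ) := Real.log_nonneg (by rw [le_div_iff₀ hκ0]; linarith)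
  have hloginvκ0 : 0 ≤ Real.log (1/κ) := Real.log_nonneg (by rw [le_div_iff₀ hκ0]; linarith)
  have hCreal0 : 0 ≤ Creal := by
    rw [hCrealdef]
    have : 0 ≤ NEr/m := by positivity
    positivity
  -- endgame
  have hend : Creal ≤ c * L := by
    rw [hCrealdef]
    apply LY_endgame c γ Cγ η L h M κ (NEr/m) M0r hc hγdef hCγdef hηdef
      (by rw [← hL₀def]; exact hLL₀) hh0 hM0 hhM hprodR (by rw [hκdef, hBdef])
      (by rw [div_le_iff₀ hm0']; exact hNErle) (by positivity) hM0rle hM0r0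
  -- sofic entropy bound
  have hsofic : soficEpsEntropy Γ X S ρ (4*t) ≤ (Creal : EReal) := by
    unfold soficEpsEntropy
    refine le_trans (iInf_le_of_le E (iInf_le_of_le hEne
      (iInf_le_of_le δ (iInf_le_of_le hδ0 le_rfl)))) ?_
    -- eventual bounds
    have hev1 : ∀ᶠ i in atTop, ∀ s ∈ E, ∀ s' ∈ E, s ≠ s' →
        ((Finset.univ.filter fun w : Fin (S.d i) =>
          ((S.σ i) s)⁻¹ w = ((S.σ i) s')⁻¹ w).card : ℝ)
          ≤ κ/(4*((m:ℝ))^2) * (S.d i) := by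
      rw [Finset.eventually_all]
      intro s hs
      rw [Finset.eventually_all]
      intro s' hs'
      by_cases hss : s = s'
      · filter_upwards with i hne
        exact absurd hss hne
      · have happ := S.approx_sep s s' hss
        have hβ0 : 0 < κ/(4*((m:ℝ))^2) := by positivity
        have hev := happ.eventually (eventually_gt_nhds
          (show 1 - κ/(4*((m:ℝ))^2) < 1 by linarith))
        filter_upwards [hev] with i hi _
        have hcard : (Finset.univ.filter fun w : Fin (S.d i) =>
            ((S.σ i) s)⁻¹ w = ((S.σ i) s')⁻¹ w).card
            = (Finset.univ.filter fun v : Fin (S.d i) => (S.σ i) s v = (S.σ i) s' v).card :=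
          LY_perm_card_eq _ _
        have hncard : ({v : Fin (S.d i) | (S.σ i) s v ≠ (S.σ i) s' v}).ncard
            = (Finset.univ.filter fun v : Fin (S.d i) => ¬ ((S.σ i) s v = (S.σ i) s' v)).card := by
          rw [Set.ncard_eq_toFinset_card', Set.toFinset_setOf]
        have hsplit : (Finset.univ.filter fun v : Fin (S.d i) => (S.σ i) s v = (S.σ i) s' v).card
            + (Finset.univ.filter fun v : Fin (S.d i) => ¬((S.σ i) s v = (S.σ i) s' v)).card
            = S.d i := by
          rw [Finset.card_filter_add_card_filter_not]
          simp
        rcases Nat.eq_zero_or_pos (S.d i) with hd0 | hd0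
        · have hle : (Finset.univ.filter fun w : Fin (S.d i) =>
              ((S.σ i) s)⁻¹ w = ((S.σ i) s')⁻¹ w).card ≤ S.d i := by
            refine le_trans (Finset.card_filter_le _ _) ?_
            simp
          have hle' : ((Finset.univ.filter fun w : Fin (S.d i) =>
              ((S.σ i) s)⁻¹ w = ((S.σ i) s')⁻¹ w).card : ℝ) ≤ (S.d i : ℝ) := by
            exact_mod_cast hle
          have hd0r : (S.d i : ℝ) = 0 := by exact_mod_cast hd0
          have hz : κ/(4*((m:ℝ))^2) * (S.d i : ℝ) = 0 := by rw [hd0r]; ring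
          linarith
        · have hd0' : (0:ℝ) < S.d i := by exact_mod_cast hd0
          rw [lt_div_iff₀ hd0'] at hi
          rw [hncard] at hi
          rw [hcard]
          have hsplit' : ((Finset.univ.filter fun v : Fin (S.d i) =>
              (S.σ i) s v = (S.σ i) s' v).card : ℝ)
              = (S.d i : ℝ) - ((Finset.univ.filter fun v : Fin (S.d i) =>
                ¬((S.σ i) s v = (S.σ i) s' v)).card : ℝ) := by
            have := hsplit
            push_cast [← this]
            ring
          rw [hsplit']
          have e9 : (1 - κ/(4*((m:ℝ))^2)) * (S.d i : ℝ)
              = (S.d i : ℝ) - κ/(4*((m:ℝ))^2) * (S.d i : ℝ) := by ring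
          linarith
    have hev2 : ∀ᶠ i in atTop, 1 ≤ S.d i ∧ m ≤ S.d i ∧ NEr ≤ κ * S.d i := by
      have h1 := S.d_top.eventually_ge_atTop (max (max 1 m) ⌈NEr/κ⌉₊)
      filter_upwards [h1] with i hi
      have e1 : 1 ≤ S.d i := le_trans (le_trans (le_max_left 1 m) (le_max_left _ _)) hi
      have e2 : m ≤ S.d i := le_trans (le_trans (le_max_right 1 m) (le_max_left _ _)) hi
      have e3 : (⌈NEr/κ⌉₊ : ℝ) ≤ S.d i := by exact_mod_cast le_trans (le_max_right _ _) hi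
      refine ⟨e1, e2, ?_⟩
      have e4 : NEr/κ ≤ S.d i := le_trans (Nat.le_ceil _) e3
      rw [div_le_iff₀ hκ0] at e4
      linarith [e4]
    refine Filter.limsup_le_of_le (by isBoundedDefault) ?_
    filter_upwards [hev1, hev2] with i hi1 hi2
    obtain ⟨hd1, hdm, hdNE⟩ := hi2
    by_cases hne : (soficMap Γ X ρ E δ (S.σ i)).Nonempty
    swap
    · rw [if_neg hne]
      exact bot_le
    rw [if_pos hne]
    set d := S.d i with hddef
    have hd0 : 0 < d := hd1
    have hd0' : (0:ℝ) < d := by exact_mod_cast hd0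
    set K := ⌈((d:ℝ) / (m:ℝ)) * Real.log (4/κ)⌉₊ with hKdef
    set k := ⌊κ * (d:ℝ)⌋₊ with hkdef
    set Nb := DE.card ^ K * ∑ B ∈ Finset.univ.filter
      (fun B : Finset (Fin d) => B.card ≤ k), D0.card ^ B.card with hNbdef
    -- counting
    have hcount : sepNum (soficMap Γ X ρ E δ (S.σ i))
        (fun φ ψ => rhoInfty ρ (φ : Fin d → X) (ψ : Fin d → X)) (4*t) ≤ (Nb : ℕ∞) := by
      apply iSup₂_le
      intro Zs hZs
      set Z : Set (Fin d → X) := Subtype.val '' Zs with hZdef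
      have hZmap : Z ⊆ soficMap Γ X ρ E δ (S.σ i) := by
        rintro _ ⟨ζ, _, rfl⟩
        exact ζ.2
      have hZsep : ∀ f ∈ Z, ∀ g ∈ Z, f ≠ g → 4*t ≤ rhoInfty ρ f g := by
        rintro _ ⟨ζ, hζ, rfl⟩ _ ⟨ζ', hζ', rfl⟩ hne'
        exact hZs ζ hζ ζ' hζ' (fun he => hne' (by rw [he]))
      have hDEnet' : ∀ x, ∃ p ∈ DE, dynMetric ρ E x p < (4*t)/4 := by
        intro x
        obtain ⟨p, hp, hpd⟩ := hDEnet x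
        exact ⟨p, hp, by rw [show (4*t)/4 = t by ring]; exact hpd⟩
      have hD0net' : ∀ x, ∃ p ∈ D0, ρ x p < (4*t)/4 := by
        intro x
        obtain ⟨p, hp, hpd⟩ := hD0net0 x
        exact ⟨p, hp, by rw [show (4*t)/4 = t by ring]; exact hpd⟩
      have := LY_count ρ hsym htri hnn E hEne (4*t) hε0 DE D0 hDEnet' hD0net'
        κ δ hκ0 hκ1 (by rw [← hmdef]; exact hδ2) d hd0 (by rw [← hmdef]; exact hdm)
        (S.σ i) (by rw [← hmdef]; exact hi1) K k hKdef hkdef Z hZmap hZsep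
      calc Zs.encard = Z.encard := by
            rw [hZdef]
            exact (Set.InjOn.encard_image (Subtype.val_injective.injOn)).symm
        _ ≤ (Nb : ℕ∞) := this
    -- logarithm bound
    have hNb1 : 1 ≤ Nb := by
      rw [hNbdef]
      have h1 : 0 < DE.card ^ K := Nat.pow_pos hNE1
      have h2 : 0 < ∑ B ∈ Finset.univ.filter
          (fun B : Finset (Fin d) => B.card ≤ k), D0.card ^ B.card := by
        apply Finset.sum_pos'
        · intro B _; exact Nat.zero_le _
        · refine ⟨∅, ?_, ?_⟩
          · rw [Finset.mem_filter]
            exact ⟨Finset.mem_univ _, by simp⟩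
          · simp
      exact Nat.one_le_iff_ne_zero.2 (Nat.mul_ne_zero h1.ne' h2.ne')
    have hlogNb : Real.log Nb ≤ (d:ℝ) * Creal := by
      have hch := LY_chernoff d k D0.card hM01 κ hκ0 hκ1
        (hkdef ▸ Nat.floor_le (by positivity))
      have hNbR : (Nb:ℝ) ≤ (DE.card:ℝ)^K * (((D0.card:ℝ)/κ)^k * Real.exp (κ * d)) := by
        rw [hNbdef]
        push_cast
        apply mul_le_mul_of_nonneg_left _ (by positivity)
        exact_mod_cast hch
      have hRHSpos : (0:ℝ) < (DE.card:ℝ)^K * (((D0.card:ℝ)/κ)^k * Real.exp (κ * d)) := by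
        have : (0:ℝ) < (DE.card:ℝ) := by exact_mod_cast hNE1
        have : (0:ℝ) < (D0.card:ℝ) := by exact_mod_cast hM01
        positivity
      have hlog1 : Real.log Nb ≤ (K:ℝ) * Real.log DE.card
          + ((k:ℝ) * Real.log ((D0.card:ℝ)/κ) + κ * d) := by
        calc Real.log Nb ≤ Real.log ((DE.card:ℝ)^K * (((D0.card:ℝ)/κ)^k * Real.exp (κ * d))) :=
              Real.log_le_log (by exact_mod_cast Nat.lt_of_lt_of_le Nat.zero_lt_one hNb1) hNbR
          _ = (K:ℝ) * Real.log DE.card + ((k:ℝ) * Real.log ((D0.card:ℝ)/κ) + κ * d) := by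
              rw [Real.log_mul (by positivity) (by positivity),
                Real.log_mul (by positivity) (by positivity),
                Real.log_pow, Real.log_pow, Real.log_exp]
      have hKle : (K:ℝ) ≤ ((d:ℝ)/(m:ℝ)) * Real.log (4/κ) + 1 := by
        rw [hKdef]
        exact le_of_lt (Nat.ceil_lt_add_one (by positivity))
      have hterm1 : (K:ℝ) * NEr ≤ (d:ℝ) * (Real.log (4/κ) * (NEr/m)) + κ * d := by
        calc (K:ℝ) * NEr ≤ (((d:ℝ)/(m:ℝ)) * Real.log (4/κ) + 1) * NEr :=
              mul_le_mul_of_nonneg_right hKle hNEr0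
          _ = (d:ℝ) * (Real.log (4/κ) * (NEr/m)) + NEr := by field_simp
          _ ≤ (d:ℝ) * (Real.log (4/κ) * (NEr/m)) + κ * d := by linarith [hdNE]
      have hklog : Real.log ((D0.card:ℝ)/κ) = M0r + Real.log (1/κ) := by
        rw [hM0def, show ((D0.card:ℝ))/κ = (D0.card:ℝ) * (1/κ) by ring,
          Real.log_mul (by exact_mod_cast hM01.trans_lt' Nat.zero_lt_one |>.ne' ) (by positivity)]
      have hkle : (k:ℝ) ≤ κ * d := hkdef ▸ Nat.floor_le (by positivity)
      have hterm2 : (k:ℝ) * Real.log ((D0.card:ℝ)/κ) ≤ (d:ℝ) * (κ * (M0r + Real.log (1/κ))) := by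
        rw [hklog]
        calc (k:ℝ) * (M0r + Real.log (1/κ)) ≤ (κ * d) * (M0r + Real.log (1/κ)) :=
              mul_le_mul_of_nonneg_right hkle (by positivity)
          _ = (d:ℝ) * (κ * (M0r + Real.log (1/κ))) := by ring
      calc Real.log Nb ≤ (K:ℝ) * NEr + ((k:ℝ) * Real.log ((D0.card:ℝ)/κ) + κ * d) := by
            rw [hNEdef]; exact hlog1
        _ ≤ ((d:ℝ) * (Real.log (4/κ) * (NEr/m)) + κ * d)
            + ((d:ℝ) * (κ * (M0r + Real.log (1/κ))) + κ * d) := by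
            linarith [hterm1, hterm2]
        _ = (d:ℝ) * Creal := by rw [hCrealdef]; ring
    -- to EReal
    have hlog : enatLog (sepNum (soficMap Γ X ρ E δ (S.σ i))
        (fun φ ψ => rhoInfty ρ (φ : Fin d → X) (ψ : Fin d → X)) (4*t))
        ≤ ENNReal.ofReal ((d:ℝ) * Creal) := by
      refine (LY_enatLog_mono hcount).trans ?_
      rw [LY_enatLog_natCast]
      exact ENNReal.ofReal_le_ofReal hlogNb
    have hco : ((enatLog (sepNum (soficMap Γ X ρ E δ (S.σ i))
        (fun φ ψ => rhoInfty ρ (φ : Fin d → X) (ψ : Fin d → X)) (4*t)) : ℝ≥0∞) : EReal)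
        ≤ ((ENNReal.ofReal ((d:ℝ) * Creal) : ℝ≥0∞) : EReal) := by
      exact_mod_cast hlog
    calc ((enatLog (sepNum (soficMap Γ X ρ E δ (S.σ i))
        (fun φ ψ => rhoInfty ρ (φ : Fin d → X) (ψ : Fin d → X)) (4*t)) : ℝ≥0∞) : EReal)
          * (((d:ℝ)⁻¹ : ℝ) : EReal)
        ≤ ((ENNReal.ofReal ((d:ℝ) * Creal) : ℝ≥0∞) : EReal) * (((d:ℝ)⁻¹ : ℝ) : EReal) := by
          apply mul_le_mul_of_nonneg_right hco
          exact_mod_cast inv_nonneg.2 hd0'.le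
      _ = ((((d:ℝ) * Creal : ℝ)) : EReal) * (((d:ℝ)⁻¹ : ℝ) : EReal) := by
          rw [EReal.coe_ennreal_ofReal, max_eq_left (by positivity)]
      _ = ((((d:ℝ) * Creal) * (d:ℝ)⁻¹ : ℝ) : EReal) := by rw [← EReal.coe_mul]
      _ = (Creal : EReal) := by
          congr 1
          field_simp
  -- conclude
  calc soficEpsEntropy Γ X S ρ (4*t) * ((L⁻¹ : ℝ) : EReal)
      ≤ (Creal : EReal) * ((L⁻¹ : ℝ) : EReal) := by
        apply mul_le_mul_of_nonneg_right hsofic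
        exact_mod_cast inv_nonneg.2 hLpos.le
    _ = ((Creal * L⁻¹ : ℝ) : EReal) := by rw [← EReal.coe_mul]
    _ ≤ (c : EReal) := by
        have : Creal * L⁻¹ ≤ c := by
          rw [← div_eq_mul_inv, div_le_iff₀ hLpos]
          exact hend
        exact_mod_cast this

end LYmain

/-- **Theorem (Liang–Yan, Theorem 5.3).** Suppose the naive metric mean dimension
vanishes and the naive `ε`-entropy decays fast enough; then the sofic metric mean
dimension is nonpositive. -/
theorem sofic_mm_dim_nonpos_of_decaying
    (Γ X : Type*) [Group Γ] [Countable Γ]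
    [TopologicalSpace X] [CompactSpace X] [TopologicalSpace.MetrizableSpace X]
    [MulAction Γ X] [ContinuousConstSMul Γ X]
    (S : SoficApprox Γ) (ρ : X → X → ℝ) (hρ : IsCompatibleMetric X ρ)
    (h0 : mdimMNaive Γ X ρ = 0)
    (hdecay : Filter.liminf (fun ε : ℝ =>
        (naiveEpsEntropy Γ X ρ ε / ENNReal.ofReal |Real.log ε|) *
          (enatLog (sepNum X ρ ε) / ENNReal.ofReal |Real.log ε|))
      (nhdsWithin 0 (Set.Ioi 0)) = 0) :
    mdimMSofic Γ X S ρ ≤ 0 := by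
  classical
  obtain ⟨mX, hcomp, hdist⟩ := hρ
  have hsym : ∀ x y, ρ x y = ρ y x := fun x y => by
    rw [← hdist x y, ← hdist y x]
    exact @dist_comm X mX.toPseudoMetricSpace x y
  have htri : ∀ x y z, ρ x z ≤ ρ x y + ρ y z := fun x y z => by
    rw [← hdist x z, ← hdist x y, ← hdist y z]
    exact @dist_triangle X mX.toPseudoMetricSpace x y z
  have hself : ∀ x, ρ x x = 0 := fun x => by
    rw [← hdist x x]
    exact @dist_self X mX.toPseudoMetricSpace x
  have hnn : ∀ x y, 0 ≤ ρ x y := fun x y => by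
    rw [← hdist x y]
    exact @dist_nonneg X mX.toPseudoMetricSpace x y
  have hopen : ∀ (q : X) (r : ℝ), IsOpen {z : X | ρ z q < r} := by
    intro q r
    have h3 : {z : X | ρ z q < r} = @Metric.ball X mX.toPseudoMetricSpace q r := by
      ext z
      rw [Set.mem_setOf_eq, @Metric.mem_ball X mX.toPseudoMetricSpace, hdist]
    have h2 : @IsOpen X mX.toUniformSpace.toTopologicalSpace {z : X | ρ z q < r} := by
      rw [h3]
      exact @Metric.isOpen_ball X mX.toPseudoMetricSpace q r
    rwa [hcomp] at h2
  have hconts : ∀ s : Γ, Continuous (fun y : X => s • y) := fun s =>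
    continuous_const_smul s
  rcases isEmpty_or_nonempty X with hXe | hXne
  · -- X empty
    unfold mdimMSofic
    apply Filter.liminf_le_of_frequently_le'
    apply Filter.Eventually.frequently
    have hev : ∀ᶠ ε in nhdsWithin (0:ℝ) (Set.Ioi 0), (0 < ε ∧ ε < 1) := by
      filter_upwards [eventually_mem_nhdsWithin,
        (eventually_lt_nhds (show (0:ℝ) < 1 by norm_num)).filter_mono nhdsWithin_le_nhds]
        with ε h1 h2
      exact ⟨h1, h2⟩
    filter_upwards [hev] with ε hε
    obtain ⟨hε0, hε1⟩ := hε
    have hbot : soficEpsEntropy Γ X S ρ ε ≤ ⊥ := by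
      unfold soficEpsEntropy
      refine le_trans (iInf_le_of_le ({1} : Finset Γ)
        (iInf_le_of_le ⟨1, Finset.mem_singleton_self 1⟩
          (iInf_le_of_le 1 (iInf_le_of_le one_pos le_rfl)))) ?_
      refine Filter.limsup_le_of_le (by isBoundedDefault) ?_
      filter_upwards [S.d_top.eventually_ge_atTop 1] with i hi
      have hnone : ¬ (soficMap Γ X ρ ({1} : Finset Γ) 1 (S.σ i)).Nonempty := by
        rintro ⟨φ, -⟩
        exact hXe.elim (φ ⟨0, hi⟩)
      rw [if_neg hnone]
    have hb : soficEpsEntropy Γ X S ρ ε = ⊥ := le_bot_iff.1 hbot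
    rw [hb]
    have hlogneg : Real.log ε < 0 := Real.log_neg hε0 hε1
    have hloginv : 0 < (|Real.log ε|)⁻¹ := by
      have h4 : 0 < |Real.log ε| := abs_pos.2 (ne_of_lt hlogneg)
      positivity
    rw [EReal.bot_mul_coe_of_pos hloginv]
    exact bot_le
  · -- X nonempty
    suffices hcase : ∀ c : ℝ, 0 < c → mdimMSofic Γ X S ρ ≤ (c : EReal) by
      by_contra hlt
      rw [not_le] at hlt
      obtain ⟨x, h0x, hxm⟩ := EReal.lt_iff_exists_real_btwn.1 hlt
      have hx0 : (0:ℝ) < x := by exact_mod_cast h0x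
      exact absurd (hcase x hx0) (not_le.2 hxm)
    intro c hc
    set γ : ℝ := min (1/2) (c/8) with hγdef
    set Cγ : ℝ := Real.log 8 + Real.log (1/γ) + 3 with hCγdef
    set η : ℝ := min (1/2) (min (c/16) ((c/(8*Cγ))^2/2)) with hηdef
    set L₀ : ℝ := max 8 (8*Cγ/c) with hL₀def
    set t₀ : ℝ := Real.exp (-(L₀+3)) with ht₀def
    have hγ0 : 0 < γ := by rw [hγdef]; exact lt_min (by norm_num) (by positivity)
    have hloginvγ : (0:ℝ) ≤ Real.log (1/γ) := by
      apply Real.log_nonneg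
      rw [le_div_iff₀ hγ0]
      have : γ ≤ 1/2 := by rw [hγdef]; exact min_le_left _ _
      linarith
    have hlog8 : (0:ℝ) ≤ Real.log 8 := Real.log_nonneg (by norm_num)
    have hCγ0 : 0 < Cγ := by rw [hCγdef]; linarith
    have hη0 : 0 < η := by
      rw [hηdef]
      apply lt_min (by norm_num)
      apply lt_min (by positivity) (by positivity)
    have ht₀0 : 0 < t₀ := by rw [ht₀def]; positivity
    have hfreq : ∃ᶠ t in nhdsWithin (0:ℝ) (Set.Ioi 0),
        ((naiveEpsEntropy Γ X ρ t / ENNReal.ofReal |Real.log t|) *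
          (enatLog (sepNum X ρ t) / ENNReal.ofReal |Real.log t|) < ENNReal.ofReal η) := by
      apply Filter.frequently_lt_of_liminf_lt (by isBoundedDefault)
      rw [hdecay]
      exact ENNReal.ofReal_pos.2 hη0
    have hev0 : ∀ᶠ t in nhdsWithin (0:ℝ) (Set.Ioi 0), (0 < t ∧ t < t₀) := by
      filter_upwards [eventually_mem_nhdsWithin,
        (eventually_lt_nhds ht₀0).filter_mono nhdsWithin_le_nhds] with t h1 h2
      exact ⟨h1, h2⟩
    have hfreq2 := hfreq.and_eventually hev0
    unfold mdimMSofic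
    apply Filter.liminf_le_of_frequently_le'
    have hmap : Filter.Tendsto (fun t : ℝ => 4*t)
        (nhdsWithin (0:ℝ) (Set.Ioi 0)) (nhdsWithin (0:ℝ) (Set.Ioi 0)) := by
      apply tendsto_nhdsWithin_of_tendsto_nhds_of_eventually_within
      · have h5 : Filter.Tendsto (fun t : ℝ => 4*t) (nhds 0) (nhds 0) := by
          have h6 : Continuous (fun t : ℝ => 4*t) := by continuity
          have h7 := h6.tendsto (0:ℝ)
          simpa using h7
        exact h5.mono_left nhdsWithin_le_nhds
      · filter_upwards [eventually_mem_nhdsWithin] with t ht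
        have ht' : (0:ℝ) < t := ht
        have : (0:ℝ) < 4*t := by linarith
        exact this
    refine hmap.frequently (hfreq2.mono ?_)
    rintro t ⟨hprodE, ht0, htt₀⟩
    exact LY_per_t S ρ hsym htri hself hnn hopen hconts c γ Cγ η L₀ t₀ hc
      hγdef hCγdef hηdef hL₀def ht₀def t ht0 htt₀ hprodE
end
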